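/- arXiv:1404.0903 — 8 statements merged into one kernel-verified Lean document; each statement's English description precedes it below -/
import Mathlib

section
/- Let G be a group, H a complex Hilbert space, and σ : G → U(H) a unitary representation. Suppose there exists a nonzero vector φ ∈ H such that (i) φ is cyclic, i.e. the closed linear span of {σ(g)φ : g ∈ G} equals H, and (ii) the orthogonal projection P_φ of H onto the line ℂφ lies in the von Neumann algebra generated by σ(G), i.e. P_φ commutes with every bounded operator on H that commutes with σ(g) for all g ∈ G. Then σ is irreducible: every closed subspace of H invariant under σ(g) for all g ∈ G is either {0} or H. -/
open scoped InnerProductSpace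

/-- Irreducibility criterion: if a unitary representation `σ` of a group `G` on a complex
Hilbert space `H` admits a nonzero cyclic vector `φ` such that the orthogonal projection onto
the line `ℂφ` lies in the von Neumann algebra generated by `σ(G)` (i.e. it commutes with every
bounded operator commuting with all `σ g`), then `σ` is irreducible. -/
theorem irreducibility_criterion
    {G : Type*} [Group G]
    {H : Type*} [NormedAddCommGroup H] [InnerProductSpace ℂ H] [CompleteSpace H]
    (σ : G →* (H →L[ℂ] H))
    (hunitary : ∀ (g : G) (x y : H), ⟪σ g x, σ g y⟫_ℂ = ⟪x, y⟫_ℂ)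
    (φ : H) (hφ : φ ≠ 0)
    (hcyclic : (Submodule.span ℂ (Set.range fun g : G => σ g φ)).topologicalClosure = ⊤)
    (P : H →L[ℂ] H)
    (hP : ∀ x : H, P x = (⟪φ, x⟫_ℂ / ((‖φ‖ : ℂ) ^ 2)) • φ)
    (hvN : ∀ T : H →L[ℂ] H, (∀ g : G, T ∘L σ g = σ g ∘L T) → T ∘L P = P ∘L T)
    (K : Submodule ℂ H) (hK : IsClosed (K : Set H))
    (hinv : ∀ g : G, ∀ x ∈ K, σ g x ∈ K) :
    K = ⊥ ∨ K = ⊤ := by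
  haveI : CompleteSpace K := hK.completeSpace_coe
  -- orthogonal complement is also invariant
  have hinv' : ∀ g : G, ∀ x ∈ Kᗮ, σ g x ∈ Kᗮ := by
    intro g x hx
    intro k hk
    have : σ g (σ g⁻¹ k) = k := by
      rw [← ContinuousLinearMap.mul_apply, ← map_mul, mul_inv_cancel, map_one,
        ContinuousLinearMap.one_apply]
    have h1 : ⟪σ g (σ g⁻¹ k), σ g x⟫_ℂ = ⟪σ g⁻¹ k, x⟫_ℂ := hunitary g _ _
    rw [this] at h1
    rw [h1]
    exact hx _ (hinv g⁻¹ k hk)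
  set Q : H →L[ℂ] H := K.subtypeL ∘L K.orthogonalProjectionOnto with hQ
  have hQmem : ∀ x : H, Q x ∈ K := fun x => (K.orthogonalProjectionOnto x).2
  have hQK : ∀ x ∈ K, Q x = x := by
    intro x hx
    simp only [hQ, ContinuousLinearMap.comp_apply, Submodule.subtypeL_apply]
    exact Submodule.starProjection_eq_self_iff.2 hx
  have hQorth : ∀ x : H, x - Q x ∈ Kᗮ := fun x => Submodule.sub_starProjection_mem_orthogonal x
  -- Q commutes with σ g
  have hcomm : ∀ g : G, Q ∘L σ g = σ g ∘L Q := by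
    intro g
    ext x
    simp only [ContinuousLinearMap.comp_apply]
    show Q (σ g x) = σ g (Q x)
    have hx : σ g x = σ g (Q x) + σ g (x - Q x) := by rw [← map_add]; congr 1; abel
    have : (K.orthogonalProjectionOnto (σ g x) : H) = σ g (Q x) :=
      Submodule.eq_starProjection_of_mem_orthogonal' (hinv g _ (hQmem x))
        (hinv' g _ (hQorth x)) hx
    simpa [hQ] using this
  have hQP := hvN Q hcomm
  have hinner : ⟪φ, φ⟫_ℂ = ((‖φ‖ : ℂ)) ^ 2 := by
    rw [inner_self_eq_norm_sq_to_K]; norm_cast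
  have hn : ((‖φ‖ : ℂ)) ^ 2 ≠ 0 :=
    pow_ne_zero 2 (Complex.ofReal_ne_zero.mpr (norm_ne_zero_iff.mpr hφ))
  have hPφ : P φ = φ := by
    rw [hP, hinner, div_self hn, one_smul]
  have key : Q φ = (⟪φ, Q φ⟫_ℂ / ((‖φ‖ : ℂ) ^ 2)) • φ := by
    have := congrArg (fun T => T φ) hQP
    simp only [ContinuousLinearMap.comp_apply] at this
    rw [hPφ] at this
    exact this.trans (hP _)
  set c : ℂ := ⟪φ, Q φ⟫_ℂ / ((‖φ‖ : ℂ) ^ 2) with hc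
  have hidem : Q (Q φ) = Q φ := hQK _ (hQmem φ)
  have hc2 : c * c = c := by
    have h1 : Q (Q φ) = (c * c) • φ := by
      rw [key, map_smul, key, smul_smul]
    rw [hidem, key] at h1
    exact (smul_left_injective ℂ hφ h1).symm
  have hc01 : c = 0 ∨ c = 1 := by
    have h0 : c * (c - 1) = 0 := by linear_combination hc2
    rcases mul_eq_zero.mp h0 with h | h
    · exact Or.inl h
    · exact Or.inr (sub_eq_zero.mp h)
  rcases hc01 with h | h
  · -- φ ∈ Kᗮ, so K = ⊥
    left
    have hQφ : Q φ = 0 := by rw [key, h, zero_smul]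
    have hφK : φ ∈ Kᗮ := by
      have := hQorth φ
      rwa [hQφ, sub_zero] at this
    have hspan : Submodule.span ℂ (Set.range fun g : G => σ g φ) ≤ Kᗮ := by
      rw [Submodule.span_le]
      rintro _ ⟨g, rfl⟩
      exact hinv' g φ hφK
    have hclos : (Submodule.span ℂ (Set.range fun g : G => σ g φ)).topologicalClosure ≤ Kᗮ :=
      Submodule.topologicalClosure_minimal _ hspan (Submodule.isClosed_orthogonal K)
    rw [hcyclic] at hclos
    ext x
    simp only [Submodule.mem_bot]
    constructor
    · intro hx
      have hx' : x ∈ Kᗮ := hclos trivial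
      have := hx' x hx
      exact inner_self_eq_zero.mp this
    · rintro rfl; exact K.zero_mem
  · -- φ ∈ K, so K = ⊤
    right
    have hφK : φ ∈ K := by
      have hQφ : Q φ = φ := by rw [key, h, one_smul]
      rw [← hQφ]; exact hQmem φ
    have hspan : Submodule.span ℂ (Set.range fun g : G => σ g φ) ≤ K := by
      rw [Submodule.span_le]
      rintro _ ⟨g, rfl⟩
      exact hinv g φ hφK
    have hclos : (Submodule.span ℂ (Set.range fun g : G => σ g φ)).topologicalClosure ≤ K :=
      Submodule.topologicalClosure_minimal _ hspan hK
    rw [hcyclic] at hclos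
    exact top_le_iff.mp hclos
end

section
/- Let (X,μ) be a probability space and let P be an orthogonal projection on the complex Hilbert space L²(X,μ) (i.e. P is bounded, P² = P and P* = P) such that for every φ ∈ L²(X,μ) with φ ≥ 0 μ-almost everywhere, both Pφ ≥ 0 and φ − Pφ ≥ 0 hold μ-almost everywhere. Then there exists a measurable set E ⊆ X such that Pφ = χ_E · φ for every φ ∈ L²(X,μ), where χ_E denotes the indicator function of E. -/
open MeasureTheory
open scoped InnerProductSpace ComplexOrder ENNReal

/-- An orthogonal projection `P` on `L²(X,μ)` (μ a probability measure) such that both `P`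
and `I - P` preserve positivity is the projection onto `L²(E,μ)` for some measurable set `E`,
i.e. `P` acts as multiplication by the indicator function of `E`. -/
theorem positive_projection_is_indicator
    {X : Type*} [MeasurableSpace X] (μ : Measure X) [IsProbabilityMeasure μ]
    (P : Lp ℂ 2 μ →L[ℂ] Lp ℂ 2 μ)
    (hidem : ∀ φ : Lp ℂ 2 μ, P (P φ) = P φ)
    (hadj : ∀ φ ψ : Lp ℂ 2 μ, ⟪P φ, ψ⟫_ℂ = ⟪φ, P ψ⟫_ℂ)
    (hpos : ∀ φ : Lp ℂ 2 μ, (∀ᵐ x ∂μ, 0 ≤ φ x) →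
      (∀ᵐ x ∂μ, 0 ≤ (P φ : X → ℂ) x) ∧ (∀ᵐ x ∂μ, 0 ≤ φ x - (P φ : X → ℂ) x)) :
    ∃ E : Set X, MeasurableSet E ∧
      ∀ φ : Lp ℂ 2 μ, (P φ : X → ℂ) =ᵐ[μ] fun x => E.indicator (fun _ => (1 : ℂ)) x * φ x := by
  classical
  -- the constant function 1
  set one : Lp ℂ 2 μ := (memLp_const (1 : ℂ)).toLp _ with hone_def
  have hone : (one : X → ℂ) =ᵐ[μ] fun _ => (1 : ℂ) := MemLp.coeFn_toLp _
  set p : Lp ℂ 2 μ := P one with hp_def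
  have hone_pos : ∀ᵐ x ∂μ, (0 : ℂ) ≤ one x := by
    filter_upwards [hone] with x hx
    rw [hx]; exact zero_le_one
  obtain ⟨hp0, hp1'⟩ := hpos one hone_pos
  -- `⟪p, 1 - p⟫ = 0`
  have hPp : P p = p := hidem one
  have hPzero : P (one - p) = 0 := by rw [map_sub, hPp, sub_self]
  have hinner : ⟪p, one - p⟫_ℂ = (0 : ℂ) := by
    have h := hadj one (one - p)
    rw [← hp_def] at h
    rw [h, hPzero, inner_zero_right]
  -- the pointwise inner product is nonnegative a.e., and integrates to zero
  have hint : Integrable (fun x => ⟪(p : X → ℂ) x, ((one - p : Lp ℂ 2 μ) : X → ℂ) x⟫_ℂ) μ :=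
    L2.integrable_inner p (one - p)
  have hsub : ((one - p : Lp ℂ 2 μ) : X → ℂ) =ᵐ[μ] fun x => one x - p x := by
    filter_upwards [Lp.coeFn_sub one p] with x hx
    simpa using hx
  have hq_pos : ∀ᵐ x ∂μ, (0 : ℂ) ≤ ((one - p : Lp ℂ 2 μ) : X → ℂ) x := by
    filter_upwards [hsub, hp1'] with x hx hx'
    rw [hx]; exact hx'
  have hint_re : ∫ x, (⟪(p : X → ℂ) x, ((one - p : Lp ℂ 2 μ) : X → ℂ) x⟫_ℂ).re ∂μ = 0 := by
    have := integral_re hint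
    simp only [RCLike.re_to_complex] at this ⊢
    rw [this, ← L2.inner_def, hinner, Complex.zero_re]
  have hre_nonneg : ∀ᵐ x ∂μ,
      0 ≤ (⟪(p : X → ℂ) x, ((one - p : Lp ℂ 2 μ) : X → ℂ) x⟫_ℂ).re := by
    filter_upwards [hp0, hq_pos] with x h1 h2
    have : (0 : ℂ) ≤ ⟪(p : X → ℂ) x, ((one - p : Lp ℂ 2 μ) : X → ℂ) x⟫_ℂ := by
      rw [RCLike.inner_apply]
      have h1' : (starRingEnd ℂ) ((p : X → ℂ) x) = (p : X → ℂ) x := by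
        rw [Complex.conj_eq_iff_im]
        exact ((Complex.le_def.1 h1).2).symm
      rw [h1']
      exact mul_nonneg h2 h1
    exact (Complex.le_def.1 this).1
  have hre_zero : ∀ᵐ x ∂μ,
      (⟪(p : X → ℂ) x, ((one - p : Lp ℂ 2 μ) : X → ℂ) x⟫_ℂ).re = 0 := by
    have := (integral_eq_zero_iff_of_nonneg_ae hre_nonneg hint.re).1
    filter_upwards [this hint_re] with x hx using hx
  -- a.e., `p` takes only the values 0 and 1
  have hp01 : ∀ᵐ x ∂μ, (p : X → ℂ) x = 0 ∨ (p : X → ℂ) x = 1 := by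
    filter_upwards [hre_zero, hp0, hsub, hone, hq_pos] with x h0 h1 h2 h3 h4
    have him : ((p : X → ℂ) x).im = 0 := ((Complex.le_def.1 h1).2).symm
    have hqim : (((one - p : Lp ℂ 2 μ) : X → ℂ) x).im = 0 := ((Complex.le_def.1 h4).2).symm
    rw [RCLike.inner_apply, mul_comm, Complex.mul_re, Complex.conj_re, Complex.conj_im, him] at h0
    simp only [neg_zero, zero_mul, sub_zero] at h0
    have hq : (((one - p : Lp ℂ 2 μ) : X → ℂ) x).re = 1 - ((p : X → ℂ) x).re := by
      rw [h2, h3]; simp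
    rw [hq] at h0
    rcases mul_eq_zero.1 h0 with h | h
    · left; exact Complex.ext h him
    · right
      have : ((p : X → ℂ) x).re = 1 := by linarith
      exact Complex.ext (by simpa using this) (by simpa using him)
  -- the set E
  set E : Set X := (p : X → ℂ) ⁻¹' {1} with hE_def
  have hE : MeasurableSet E :=
    (Lp.stronglyMeasurable p).measurable (measurableSet_singleton 1)
  -- key: the statement holds for all φ with 0 ≤ φ ≤ 1 a.e.
  have key : ∀ φ : Lp ℂ 2 μ, (∀ᵐ x ∂μ, (0 : ℂ) ≤ φ x) → (∀ᵐ x ∂μ, (φ : X → ℂ) x ≤ 1) →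
      (P φ : X → ℂ) =ᵐ[μ] fun x => E.indicator (fun _ => (1 : ℂ)) x * φ x := by
    intro φ hφ0 hφ1
    obtain ⟨h1, h2⟩ := hpos φ hφ0
    have hψ0 : ∀ᵐ x ∂μ, (0 : ℂ) ≤ (one - φ : Lp ℂ 2 μ) x := by
      filter_upwards [Lp.coeFn_sub one φ, hone, hφ1] with x ha hb hc
      rw [ha, Pi.sub_apply, hb]
      exact sub_nonneg.2 hc
    obtain ⟨h3, h4⟩ := hpos _ hψ0
    have hPsub : (P (one - φ) : X → ℂ) =ᵐ[μ] fun x => (p : X → ℂ) x - (P φ : X → ℂ) x := by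
      rw [map_sub, ← hp_def]
      filter_upwards [Lp.coeFn_sub p (P φ)] with x hx
      simpa using hx
    -- h3' : Pφ ≤ p a.e.
    have h3' : ∀ᵐ x ∂μ, (P φ : X → ℂ) x ≤ (p : X → ℂ) x := by
      filter_upwards [h3, hPsub] with x hx hy
      rw [hy] at hx
      exact sub_nonneg.1 hx
    -- h4' : φ - Pφ ≤ 1 - p a.e.
    have h4' : ∀ᵐ x ∂μ, (φ : X → ℂ) x - (P φ : X → ℂ) x ≤ 1 - (p : X → ℂ) x := by
      filter_upwards [h4, hPsub, Lp.coeFn_sub one φ, hone] with x hx hy hz hw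
      rw [hz, hy] at hx
      have hx' : (0:ℂ) ≤ (1 - (p : X → ℂ) x) - ((φ : X → ℂ) x - (P φ : X → ℂ) x) := by
        have heq : (1 - (p : X → ℂ) x) - ((φ : X → ℂ) x - (P φ : X → ℂ) x)
            = (1 - (φ : X → ℂ) x) - ((p : X → ℂ) x - (P φ : X → ℂ) x) := by ring
        rw [heq]
        simpa [Pi.sub_apply, hw] using hx
      exact sub_nonneg.1 hx'
    filter_upwards [h1, h2, h3', h4', hp01] with x hx1 hx2 hx3 hx4 hx5
    rcases hx5 with hz | ho
    · have hnot : x ∉ E := by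
        intro hxE
        rw [hE_def, Set.mem_preimage, Set.mem_singleton_iff] at hxE
        rw [hz] at hxE
        exact zero_ne_one hxE
      rw [Set.indicator_of_notMem hnot, zero_mul]
      rw [hz] at hx3
      exact le_antisymm hx3 hx1
    · have hmem : x ∈ E := by
        rw [hE_def, Set.mem_preimage, Set.mem_singleton_iff]; exact ho
      rw [Set.indicator_of_mem hmem, one_mul]
      rw [ho] at hx4
      simp only [sub_self] at hx4
      have hle : (φ : X → ℂ) x ≤ (P φ : X → ℂ) x := by
        have := sub_nonpos.1 hx4
        exact this
      have hge : (P φ : X → ℂ) x ≤ (φ : X → ℂ) x := sub_nonneg.1 hx2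
      exact le_antisymm hge hle
  -- the multiplication operator M
  have hmem : ∀ f : Lp ℂ 2 μ,
      MemLp (fun x => E.indicator (fun _ => (1 : ℂ)) x * f x) 2 μ := by
    intro f
    refine MemLp.of_le (Lp.memLp f)
      (((measurable_const.indicator hE).aestronglyMeasurable).mul (Lp.aestronglyMeasurable f)) ?_
    filter_upwards with x
    by_cases hx : x ∈ E
    · simp [Set.indicator_of_mem hx]
    · simp [Set.indicator_of_notMem hx]
  let Mlin : Lp ℂ 2 μ →ₗ[ℂ] Lp ℂ 2 μ :=
    { toFun := fun f => (hmem f).toLp _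
      map_add' := by
        intro f g
        refine Lp.ext ?_
        filter_upwards [MemLp.coeFn_toLp (hmem (f + g)), Lp.coeFn_add f g,
          Lp.coeFn_add ((hmem f).toLp _) ((hmem g).toLp _),
          MemLp.coeFn_toLp (hmem f), MemLp.coeFn_toLp (hmem g)] with x h1 h2 h3 h4 h5
        rw [h1, h3]
        simp only [Pi.add_apply, h4, h5, h2]
        ring
      map_smul' := by
        intro c f
        refine Lp.ext ?_
        filter_upwards [MemLp.coeFn_toLp (hmem (c • f)), Lp.coeFn_smul c f,
          Lp.coeFn_smul c ((hmem f).toLp _), MemLp.coeFn_toLp (hmem f)] with x h1 h2 h3 h4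
        rw [h1, h2, RingHom.id_apply, h3]
        simp only [Pi.smul_apply, h4, smul_eq_mul]
        ring }
  have hMlin_apply : ∀ f : Lp ℂ 2 μ,
      (Mlin f : X → ℂ) =ᵐ[μ] fun x => E.indicator (fun _ => (1 : ℂ)) x * f x :=
    fun f => MemLp.coeFn_toLp (hmem f)
  have hMbound : ∀ f : Lp ℂ 2 μ, ‖Mlin f‖ ≤ 1 * ‖f‖ := by
    intro f
    rw [one_mul]
    refine Lp.norm_le_norm_of_ae_le ?_
    filter_upwards [hMlin_apply f] with x hx
    rw [hx]
    by_cases hxE : x ∈ E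
    · simp [Set.indicator_of_mem hxE]
    · simp [Set.indicator_of_notMem hxE]
  let M : Lp ℂ 2 μ →L[ℂ] Lp ℂ 2 μ := LinearMap.mkContinuous Mlin 1 hMbound
  have hM : ∀ f : Lp ℂ 2 μ,
      (M f : X → ℂ) =ᵐ[μ] fun x => E.indicator (fun _ => (1 : ℂ)) x * f x :=
    fun f => hMlin_apply f
  -- P = M, by density of simple functions
  have hall : ∀ f : Lp ℂ 2 μ, P f = M f := by
    refine Lp.induction (show (2 : ℝ≥0∞) ≠ ∞ by norm_num) (fun f => P f = M f) ?_ ?_ ?_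
    · intro c s hs hμs
      rw [Lp.simpleFunc.coe_indicatorConst]
      have h1 : indicatorConstLp 2 hs hμs.ne c = c • indicatorConstLp 2 hs hμs.ne (1 : ℂ) := by
        refine Lp.ext ?_
        filter_upwards [indicatorConstLp_coeFn (μ := μ) (p := 2) (c := c) (hs := hs) (hμs := hμs.ne),
          Lp.coeFn_smul c (indicatorConstLp 2 hs hμs.ne (1 : ℂ)),
          indicatorConstLp_coeFn (μ := μ) (p := 2) (c := (1 : ℂ)) (hs := hs) (hμs := hμs.ne)]
          with x hx hy hz
        rw [hx, hy, Pi.smul_apply, hz, smul_eq_mul]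
        by_cases hxs : x ∈ s
        · simp [Set.indicator_of_mem hxs]
        · simp [Set.indicator_of_notMem hxs]
      have hbase : P (indicatorConstLp 2 hs hμs.ne (1 : ℂ))
          = M (indicatorConstLp 2 hs hμs.ne (1 : ℂ)) := by
        refine Lp.ext ?_
        have hc := indicatorConstLp_coeFn (c := (1 : ℂ)) (hs := hs) (hμs := hμs.ne)
          (μ := μ) (p := 2)
        have h0 : ∀ᵐ x ∂μ, (0 : ℂ) ≤ (indicatorConstLp 2 hs hμs.ne (1 : ℂ) : X → ℂ) x := by
          filter_upwards [hc] with x hx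
          rw [hx]
          by_cases hxs : x ∈ s
          · simp [Set.indicator_of_mem hxs]
          · simp [Set.indicator_of_notMem hxs]
        have hle1 : ∀ᵐ x ∂μ, (indicatorConstLp 2 hs hμs.ne (1 : ℂ) : X → ℂ) x ≤ 1 := by
          filter_upwards [hc] with x hx
          rw [hx]
          by_cases hxs : x ∈ s
          · simp [Set.indicator_of_mem hxs]
          · simp [Set.indicator_of_notMem hxs]
        filter_upwards [key _ h0 hle1, hM (indicatorConstLp 2 hs hμs.ne (1 : ℂ))] with x hx hy
        rw [hx, hy]
      rw [h1, _root_.map_smul, _root_.map_smul, hbase]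
    · intro f g hf hg _ h1 h2
      rw [map_add, map_add, h1, h2]
    · exact isClosed_eq P.continuous M.continuous
  refine ⟨E, hE, fun φ => ?_⟩
  rw [hall φ]
  exact hM φ
end

section
/- Let (Z,ρ) be a metric space of diameter at most 1, let D > 0, c > 0, C > 0, and let μ be a Borel probability measure on Z that is Ahlfors regular of dimension D with constants c, C, i.e. c·r^D ≤ μ(B(ξ,r)) ≤ C·r^D for every ξ ∈ Z and every 0 < r ≤ 1, where B(ξ,r) is the closed ball. Then there exist constants c', C' > 0, depending only on c, C and D, such that for every x ∈ Z and every T ≥ 1: c'·(1 + log T) ≤ ∫_Z min(T, ρ(x,ξ)^{−D}) dμ(ξ) ≤ C'·(1 + log T). -/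
open MeasureTheory Metric

/-- For an Ahlfors regular probability measure `μ` of dimension `D` on a metric space of
diameter at most 1, the integral `∫ min(T, ρ(x,ξ)^(-D)) dμ(ξ)` is comparable to `1 + log T`,
uniformly in `x` and `T ≥ 1`, with comparison constants depending only on `c`, `C` and `D`. -/
theorem integral_min_rpow_asymp_log
    (D c C : ℝ) (hD : 0 < D) (hc : 0 < c) (hC : 0 < C) :
    ∃ c' C' : ℝ, 0 < c' ∧ 0 < C' ∧
      ∀ (Z : Type) [MetricSpace Z] [MeasurableSpace Z] [BorelSpace Z]
        (μ : Measure Z) [IsProbabilityMeasure μ],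
        diam (Set.univ : Set Z) ≤ 1 →
        (∀ (ξ : Z) (r : ℝ), 0 < r → r ≤ 1 →
          c * r ^ D ≤ (μ (closedBall ξ r)).toReal ∧
            (μ (closedBall ξ r)).toReal ≤ C * r ^ D) →
        ∀ (x : Z) (T : ℝ), 1 ≤ T →
          c' * (1 + Real.log T) ≤ ∫ ξ, min T (dist x ξ ^ (-D)) ∂μ ∧
            ∫ ξ, min T (dist x ξ ^ (-D)) ∂μ ≤ C' * (1 + Real.log T) := by
  refine ⟨min c 1, max 1 C, lt_min hc one_pos, lt_of_lt_of_le one_pos (le_max_left _ _), ?_⟩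
  intro Z _ _ _ μ _ hdiam hreg x T hT
  have hT0 : (0:ℝ) < T := lt_of_lt_of_le one_pos hT
  have hDne : D ≠ 0 := hD.ne'
  have hnegD : -D < 0 := neg_neg_iff_pos.mpr hD
  set f : Z → ℝ := fun ξ => min T (dist x ξ ^ (-D)) with hfdef
  have f_nn : ∀ ξ, 0 ≤ f ξ := fun ξ => le_min hT0.le (Real.rpow_nonneg dist_nonneg _)
  have f_le : ∀ ξ, f ξ ≤ T := fun ξ => min_le_left _ _
  have f_meas : Measurable f :=
    measurable_const.min (((continuous_const.dist continuous_id).measurable).pow measurable_const)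
  have f_int : Integrable f μ := by
    refine Integrable.mono' (integrable_const T) f_meas.aestronglyMeasurable ?_
    exact ae_of_all _ fun ξ => by
      rw [Real.norm_eq_abs, abs_of_nonneg (f_nn ξ)]; exact f_le ξ
  -- the point x is a null atom
  have hμx : μ {x} = 0 := by
    have key : ∀ ε : ℝ, 0 < ε → (μ {x}).toReal ≤ ε := by
      intro ε hε
      set r := min 1 ((ε / C) ^ D⁻¹) with hrdef
      have hq : (0:ℝ) < (ε / C) ^ D⁻¹ := Real.rpow_pos_of_pos (div_pos hε hC) _
      have hr0 : 0 < r := lt_min one_pos hq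
      have hr1 : r ≤ 1 := min_le_left _ _
      have h1 : (μ {x}).toReal ≤ C * r ^ D := by
        refine le_trans (ENNReal.toReal_mono (measure_ne_top _ _)
          (measure_mono ?_)) (hreg x r hr0 hr1).2
        exact Set.singleton_subset_iff.mpr (mem_closedBall_self hr0.le)
      have h2 : r ^ D ≤ ε / C := by
        calc r ^ D ≤ ((ε / C) ^ D⁻¹) ^ D :=
              Real.rpow_le_rpow hr0.le (min_le_right _ _) hD.le
          _ = ε / C := Real.rpow_inv_rpow (by positivity) hDne
      calc (μ {x}).toReal ≤ C * r ^ D := h1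
        _ ≤ C * (ε / C) := by nlinarith
        _ = ε := by field_simp
    have h0 : (μ {x}).toReal = 0 := by
      by_contra h
      have ha : 0 < (μ {x}).toReal := lt_of_le_of_ne ENNReal.toReal_nonneg (Ne.symm h)
      linarith [key _ (half_pos ha)]
    rcases (ENNReal.toReal_eq_zero_iff _).mp h0 with h | h
    · exact h
    · exact absurd h (measure_ne_top μ _)
  -- the layer-cake function
  set g : ℝ → ℝ := fun t => (μ {ξ | t ≤ f ξ}).toReal with hgdef
  have hlayer : ∫ ξ, f ξ ∂μ = ∫ t in Set.Ioc 0 T, g t :=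
    f_int.integral_eq_integral_Ioc_meas_le (ae_of_all _ f_nn) (ae_of_all _ f_le)
  have g_anti : Antitone g := fun s t hst =>
    ENNReal.toReal_mono (measure_ne_top _ _)
      (measure_mono fun ξ hξ => le_trans hst hξ)
  have g_le_one : ∀ t, g t ≤ 1 := by
    intro t
    have : (μ {ξ | t ≤ f ξ}).toReal ≤ (μ Set.univ).toReal :=
      ENNReal.toReal_mono (measure_ne_top _ _) (measure_mono (Set.subset_univ _))
    simpa using this
  -- key radius facts
  have hrD : ∀ t : ℝ, 0 < t → (t ^ (-D)⁻¹) ^ D = t⁻¹ := by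
    intro t ht
    rw [← Real.rpow_mul ht.le]
    have : (-D)⁻¹ * D = -1 := by field_simp
    rw [this, Real.rpow_neg_one]
  -- upper bound for g on (1, T]
  have hub : ∀ t ∈ Set.Ioc (1:ℝ) T, g t ≤ C * t⁻¹ := by
    rintro t ⟨ht1, htT⟩
    have ht0 : (0:ℝ) < t := lt_trans one_pos ht1
    set r := t ^ (-D)⁻¹ with hrdef
    have hr0 : 0 < r := Real.rpow_pos_of_pos ht0 _
    have hr1 : r ≤ 1 := Real.rpow_le_one_of_one_le_of_nonpos ht1.le
      (by rw [inv_nonpos]; linarith)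
    have hsub : {ξ | t ≤ f ξ} ⊆ closedBall x r := by
      intro ξ hξ
      have hd : 0 < dist x ξ := by
        rcases eq_or_lt_of_le (dist_nonneg (x := x) (y := ξ)) with h | h
        · exfalso
          have hξ' : t ≤ f ξ := hξ
          have hz : f ξ = 0 := by
            simp only [hfdef, ← h, Real.zero_rpow (neg_ne_zero.mpr hDne)]
            exact min_eq_right hT0.le
          rw [hz] at hξ'
          linarith
        · exact h
      have h1 : t ≤ dist x ξ ^ (-D) := le_trans hξ (min_le_right _ _)
      have h2 : dist x ξ ≤ r := (Real.le_rpow_inv_iff_of_neg hd ht0 hnegD).mpr h1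
      rw [mem_closedBall, dist_comm]; exact h2
    calc g t ≤ (μ (closedBall x r)).toReal :=
          ENNReal.toReal_mono (measure_ne_top _ _) (measure_mono hsub)
      _ ≤ C * r ^ D := (hreg x r hr0 hr1).2
      _ = C * t⁻¹ := by rw [hrD t ht0]
  -- lower bound for g on (1, T]
  have hlb2 : ∀ t ∈ Set.Ioc (1:ℝ) T, c * t⁻¹ ≤ g t := by
    rintro t ⟨ht1, htT⟩
    have ht0 : (0:ℝ) < t := lt_trans one_pos ht1
    set r := t ^ (-D)⁻¹ with hrdef
    have hr0 : 0 < r := Real.rpow_pos_of_pos ht0 _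
    have hr1 : r ≤ 1 := Real.rpow_le_one_of_one_le_of_nonpos ht1.le
      (by rw [inv_nonpos]; linarith)
    have hsub : closedBall x r \ {x} ⊆ {ξ | t ≤ f ξ} := by
      rintro ξ ⟨hξb, hξx⟩
      have hd : 0 < dist x ξ := by
        rw [dist_comm]; exact dist_pos.mpr (by simpa using hξx)
      have h2 : dist x ξ ≤ r := by rw [dist_comm]; exact mem_closedBall.mp hξb
      have h1 : t ≤ dist x ξ ^ (-D) := (Real.le_rpow_inv_iff_of_neg hd ht0 hnegD).mp h2
      exact le_min htT h1
    calc c * t⁻¹ = c * r ^ D := by rw [hrD t ht0]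
      _ ≤ (μ (closedBall x r)).toReal := (hreg x r hr0 hr1).1
      _ = (μ (closedBall x r \ {x})).toReal := by rw [measure_diff_null hμx]
      _ ≤ g t := ENNReal.toReal_mono (measure_ne_top _ _) (measure_mono hsub)
  -- lower bound for g on (0, 1]
  have hlb1 : ∀ t ∈ Set.Ioc (0:ℝ) 1, c ≤ g t := by
    rintro t ⟨ht0, ht1⟩
    have hsub : closedBall x 1 \ {x} ⊆ {ξ | t ≤ f ξ} := by
      rintro ξ ⟨hξb, hξx⟩
      have hd : 0 < dist x ξ := by
        rw [dist_comm]; exact dist_pos.mpr (by simpa using hξx)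
      have h2 : dist x ξ ≤ 1 := by rw [dist_comm]; exact mem_closedBall.mp hξb
      have h1 : (1:ℝ) ≤ dist x ξ ^ (-D) :=
        Real.one_le_rpow_of_pos_of_le_one_of_nonpos hd h2 hnegD.le
      exact le_min (le_trans ht1 hT) (le_trans ht1 h1)
    calc c = c * (1:ℝ) ^ D := by rw [Real.one_rpow, mul_one]
      _ ≤ (μ (closedBall x 1)).toReal := (hreg x 1 one_pos le_rfl).1
      _ = (μ (closedBall x 1 \ {x})).toReal := by rw [measure_diff_null hμx]
      _ ≤ g t := ENNReal.toReal_mono (measure_ne_top _ _) (measure_mono hsub)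
  -- integrability facts
  have gIntOn : ∀ a b : ℝ, IntegrableOn g (Set.Ioc a b) := fun a b =>
    (g_anti.intervalIntegrable).1
  have invIntOn : IntegrableOn (fun t : ℝ => t⁻¹) (Set.Ioc 1 T) := by
    rw [← intervalIntegrable_iff_integrableOn_Ioc_of_le hT]
    refine intervalIntegral.intervalIntegrable_inv (fun t ht => ?_) continuousOn_id
    rw [Set.uIcc_of_le hT] at ht
    exact ne_of_gt (lt_of_lt_of_le one_pos ht.1)
  have hinv_eq : ∫ t in Set.Ioc (1:ℝ) T, t⁻¹ = Real.log T := by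
    rw [← intervalIntegral.integral_of_le hT, integral_inv (Set.notMem_uIcc_of_lt one_pos hT0)]
    simp
  -- splitting the integral
  have hsplit : ∫ t in Set.Ioc (0:ℝ) T, g t
      = (∫ t in Set.Ioc (0:ℝ) 1, g t) + ∫ t in Set.Ioc (1:ℝ) T, g t := by
    rw [← setIntegral_union (Set.Ioc_disjoint_Ioc_of_le le_rfl) measurableSet_Ioc
        (gIntOn 0 1) (gIntOn 1 T), Set.Ioc_union_Ioc_eq_Ioc zero_le_one hT]
  have hlogT : 0 ≤ Real.log T := Real.log_nonneg hT
  -- lower bounds on the two pieces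
  have hL1 : c ≤ ∫ t in Set.Ioc (0:ℝ) 1, g t := by
    have := setIntegral_mono_on ((integrableOn_const_iff).mpr (Or.inr (by simp)))
      (gIntOn 0 1) measurableSet_Ioc hlb1
    simpa using this
  have hL2 : c * Real.log T ≤ ∫ t in Set.Ioc (1:ℝ) T, g t := by
    have h1 : ∫ t in Set.Ioc (1:ℝ) T, c * t⁻¹ = c * Real.log T := by
      rw [integral_const_mul, hinv_eq]
    have := setIntegral_mono_on (invIntOn.const_mul c) (gIntOn 1 T)
      measurableSet_Ioc hlb2
    rw [h1] at this; exact this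
  -- upper bounds on the two pieces
  have hU1 : ∫ t in Set.Ioc (0:ℝ) 1, g t ≤ 1 := by
    have := setIntegral_mono_on (gIntOn 0 1)
      ((integrableOn_const_iff).mpr (Or.inr (by simp))) measurableSet_Ioc
      (fun t _ => g_le_one t)
    simpa using this
  have hU2 : ∫ t in Set.Ioc (1:ℝ) T, g t ≤ C * Real.log T := by
    have h1 : ∫ t in Set.Ioc (1:ℝ) T, C * t⁻¹ = C * Real.log T := by
      rw [integral_const_mul, hinv_eq]
    have := setIntegral_mono_on (gIntOn 1 T) (invIntOn.const_mul C)
      measurableSet_Ioc hub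
    rw [h1] at this; exact this
  -- conclude
  have hA : min c 1 * (1 + Real.log T) ≤ c * 1 + c * Real.log T := by
    have h1 : min c 1 ≤ c := min_le_left _ _
    have h2 : 0 < min c 1 := lt_min hc one_pos
    nlinarith
  have hB : 1 + C * Real.log T ≤ max 1 C * (1 + Real.log T) := by
    have h1 : (1:ℝ) ≤ max 1 C := le_max_left _ _
    have h2 : C ≤ max 1 C := le_max_right _ _
    nlinarith
  constructor
  · rw [hlayer, hsplit]; linarith
  · rw [hlayer, hsplit]; linarith
end

section
/- Let (Z,ρ) be a metric space, μ a Borel probability measure on Z, x ∈ Z, D > 1 and M > 0. Let f : Z → [0,∞) be μ-integrable with ∫_Z f dμ = 1 and f(ξ) ≤ M·ρ(x,ξ)^{−D} for μ-almost every ξ ∈ Z. Then for every Lipschitz function ψ : Z → ℝ with Lipschitz constant λ one has |∫_Z f·ψ dμ − ψ(x)| ≤ 2·λ·M^{1/D}. -/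
open MeasureTheory

/-- If `f ≥ 0` is a probability density on `(Z,μ)` satisfying `f(ξ) ≤ M·ρ(x,ξ)^(-D)` a.e.
with `D > 1`, then for any `λ`-Lipschitz function `ψ` one has
`|∫ f·ψ dμ − ψ(x)| ≤ 2·λ·M^(1/D)`. -/
theorem lipschitz_eval_approx
    {Z : Type*} [MetricSpace Z] [MeasurableSpace Z] [BorelSpace Z]
    (μ : Measure Z) [IsProbabilityMeasure μ]
    (x : Z) (D M : ℝ) (hD : 1 < D) (hM : 0 < M)
    (f : Z → ℝ) (hf_int : Integrable f μ)
    (hf_nonneg : ∀ᵐ ξ ∂μ, 0 ≤ f ξ)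
    (hf_one : ∫ ξ, f ξ ∂μ = 1)
    (hf_bound : ∀ᵐ ξ ∂μ, f ξ ≤ M * dist x ξ ^ (-D))
    (ψ : Z → ℝ) (lam : ℝ) (hlam : 0 ≤ lam)
    (hψ : ∀ ξ η : Z, |ψ ξ - ψ η| ≤ lam * dist ξ η) :
    |(∫ ξ, f ξ * ψ ξ ∂μ) - ψ x| ≤ 2 * lam * M ^ (1 / D) := by
  set r : ℝ := M ^ (1 / D) with hr
  have hD0 : (0:ℝ) < D := lt_trans one_pos hD
  have hr0 : 0 < r := Real.rpow_pos_of_pos hM _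
  have hrD : r ^ D = M := by
    rw [hr, ← Real.rpow_mul hM.le, one_div_mul_cancel hD0.ne', Real.rpow_one]
  -- pointwise bound
  have hpt : ∀ᵐ ξ ∂μ, f ξ * dist x ξ ≤ r * f ξ + r := by
    filter_upwards [hf_nonneg, hf_bound] with ξ h0 hb
    rcases le_or_gt (dist x ξ) r with h | h
    · have : f ξ * dist x ξ ≤ f ξ * r := mul_le_mul_of_nonneg_left h h0
      nlinarith
    · have hd0 : 0 < dist x ξ := lt_trans hr0 h
      have h1 : f ξ * dist x ξ ≤ M * dist x ξ ^ (-D) * dist x ξ :=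
        mul_le_mul_of_nonneg_right hb dist_nonneg
      have h2 : M * dist x ξ ^ (-D) * dist x ξ = M * dist x ξ ^ (1 - D) := by
        rw [mul_assoc, ← Real.rpow_add_one hd0.ne' (-D)]
        ring_nf
      have h3 : dist x ξ ^ (1 - D) ≤ r ^ (1 - D) := by
        exact Real.rpow_le_rpow_of_nonpos hr0 h.le (by linarith)
      have h4 : M * r ^ (1 - D) = r := by
        have : r ^ (1 - D) = r * (r ^ D)⁻¹ := by
          rw [Real.rpow_sub hr0, Real.rpow_one]
          ring
        rw [this, hrD]
        field_simp
      have : f ξ * dist x ξ ≤ r := by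
        calc f ξ * dist x ξ ≤ M * dist x ξ ^ (1 - D) := h2 ▸ h1
          _ ≤ M * r ^ (1 - D) := mul_le_mul_of_nonneg_left h3 hM.le
          _ = r := h4
      nlinarith
  have hdist_int : Integrable (fun ξ => f ξ * dist x ξ) μ := by
    apply Integrable.mono' ((hf_int.const_mul r).add (integrable_const r))
    · exact hf_int.aestronglyMeasurable.mul ((continuous_const.dist continuous_id).aestronglyMeasurable)
    · filter_upwards [hf_nonneg, hpt] with ξ h0 hb
      rwa [Real.norm_eq_abs, abs_of_nonneg (mul_nonneg h0 dist_nonneg)]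
  have hdist_le : ∫ ξ, f ξ * dist x ξ ∂μ ≤ 2 * r := by
    calc ∫ ξ, f ξ * dist x ξ ∂μ ≤ ∫ ξ, r * f ξ + r ∂μ :=
          integral_mono_ae hdist_int ((hf_int.const_mul r).add (integrable_const r)) hpt
      _ = r * (∫ ξ, f ξ ∂μ) + r := by
          rw [integral_add (hf_int.const_mul r) (integrable_const r),
            integral_const_mul, integral_const, probReal_univ]
          simp
      _ = 2 * r := by rw [hf_one]; ring
  have hψint : Integrable (fun ξ => f ξ * (ψ ξ - ψ x)) μ := by
    apply Integrable.mono' (hdist_int.const_mul lam)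
    · have hψc : Continuous ψ := by
        have : LipschitzWith lam.toNNReal ψ := by
          apply LipschitzWith.of_dist_le_mul
          intro a b
          simpa [Real.dist_eq, Real.coe_toNNReal lam hlam] using hψ a b
        exact this.continuous
      exact hf_int.aestronglyMeasurable.mul
        ((hψc.sub continuous_const).aestronglyMeasurable)
    · filter_upwards [hf_nonneg] with ξ h0
      rw [Real.norm_eq_abs, abs_mul, abs_of_nonneg h0]
      calc f ξ * |ψ ξ - ψ x| ≤ f ξ * (lam * dist ξ x) :=
            mul_le_mul_of_nonneg_left (hψ ξ x) h0
        _ = lam * (f ξ * dist x ξ) := by rw [dist_comm]; ring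
  have hfψint : Integrable (fun ξ => f ξ * ψ ξ) μ := by
    have : (fun ξ => f ξ * ψ ξ) = fun ξ => f ξ * (ψ ξ - ψ x) + f ξ * ψ x := by
      ext ξ; ring
    rw [this]
    exact hψint.add (hf_int.mul_const _)
  have key : (∫ ξ, f ξ * ψ ξ ∂μ) - ψ x = ∫ ξ, f ξ * (ψ ξ - ψ x) ∂μ := by
    have : ∫ ξ, f ξ * (ψ ξ - ψ x) ∂μ = (∫ ξ, f ξ * ψ ξ ∂μ) - (∫ ξ, f ξ ∂μ) * ψ x := by
      rw [← integral_mul_const]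
      rw [← integral_sub hfψint (hf_int.mul_const _)]
      congr 1; ext ξ; ring
    rw [this, hf_one, one_mul]
  rw [key]
  calc |∫ ξ, f ξ * (ψ ξ - ψ x) ∂μ| ≤ ∫ ξ, |f ξ * (ψ ξ - ψ x)| ∂μ := by
        simpa [Real.norm_eq_abs, abs_mul] using norm_integral_le_integral_norm (fun ξ => f ξ * (ψ ξ - ψ x)) (μ := μ)
    _ ≤ ∫ ξ, lam * (f ξ * dist x ξ) ∂μ := by
        apply integral_mono_ae hψint.abs (hdist_int.const_mul lam)
        filter_upwards [hf_nonneg] with ξ h0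
        rw [abs_mul, abs_of_nonneg h0]
        calc f ξ * |ψ ξ - ψ x| ≤ f ξ * (lam * dist ξ x) :=
              mul_le_mul_of_nonneg_left (hψ ξ x) h0
          _ = lam * (f ξ * dist x ξ) := by rw [dist_comm]; ring
    _ = lam * ∫ ξ, f ξ * dist x ξ ∂μ := integral_const_mul _ _
    _ ≤ lam * (2 * r) := mul_le_mul_of_nonneg_left hdist_le hlam
    _ = 2 * lam * r := by ring
end

section
/- Let (Z,ρ) be a metric space, D > 0, C > 0, let N be a positive integer and let x₁, …, x_N ∈ Z (not necessarily distinct) be points such that for every η ∈ Z and every real s with N^{−1/D} ≤ s ≤ 1 one has #{i ∈ {1,…,N} : ρ(x_i,η) ≤ s} ≤ C·N·s^D. Then for every η ∈ Z: Σ_{i=1}^N min(N, ρ(x_i,η)^{−D}) ≤ (1+C)·N·(1 + log N). -/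
/-- If `N` points `x₁, …, x_N` in a metric space satisfy the counting bound
`#{i : ρ(x_i,η) ≤ s} ≤ C·N·s^D` for all `η` and all `N^(-1/D) ≤ s ≤ 1`, then
`Σ_i min(N, ρ(x_i,η)^(-D)) ≤ (1+C)·N·(1 + log N)` for every `η`. -/
theorem sum_min_rpow_le
    {Z : Type*} [MetricSpace Z] (D C : ℝ) (hD : 0 < D) (hC : 0 < C)
    (N : ℕ) (hN : 0 < N) (x : Fin N → Z)
    (hcount : ∀ (η : Z) (s : ℝ), (N : ℝ) ^ (-(1 / D)) ≤ s → s ≤ 1 →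
      (Nat.card {i : Fin N // dist (x i) η ≤ s} : ℝ) ≤ C * N * s ^ D) :
    ∀ η : Z, ∑ i : Fin N, min (N : ℝ) (dist (x i) η ^ (-D)) ≤
      (1 + C) * N * (1 + Real.log N) := by
  classical
  intro η
  set ρ : Fin N → ℝ := fun i => dist (x i) η with hρ
  have hρ0 : ∀ i, 0 ≤ ρ i := fun i => dist_nonneg
  -- pointwise bound: min(N,a) ≤ 1 + #{k ∈ [1,N-1] : k ≤ a}
  have key : ∀ i, min (N : ℝ) (ρ i ^ (-D)) ≤
      1 + ∑ k ∈ Finset.Ico 1 N, (if (k : ℝ) ≤ ρ i ^ (-D) then (1 : ℝ) else 0) := by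
    intro i
    set a := ρ i ^ (-D) with ha
    have ha0 : 0 ≤ a := Real.rpow_nonneg (hρ0 i) _
    by_cases hcase : (N : ℝ) ≤ a
    · rw [min_eq_left hcase]
      have hall : ∀ k ∈ Finset.Ico 1 N, (if (k : ℝ) ≤ a then (1 : ℝ) else 0) = 1 := by
        intro k hk
        have hkN : (k : ℝ) ≤ N := Nat.cast_le.2 (Finset.mem_Ico.1 hk).2.le
        rw [if_pos (hkN.trans hcase)]
      rw [Finset.sum_congr rfl hall, Finset.sum_const, Nat.card_Ico, nsmul_eq_mul, mul_one]
      rw [Nat.cast_sub hN, Nat.cast_one]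
      linarith
    · push_neg at hcase
      rw [min_eq_right hcase.le]
      set m := ⌊a⌋₊ with hm
      have hmN : m + 1 ≤ N := by
        have : m ≤ a := Nat.floor_le ha0
        have : (m : ℝ) < N := lt_of_le_of_lt this hcase
        exact_mod_cast Nat.cast_lt.1 this
      have hsub : Finset.Ico 1 (m + 1) ⊆ Finset.Ico 1 N :=
        Finset.Ico_subset_Ico le_rfl hmN
      have hsum1 : (m : ℝ) = ∑ k ∈ Finset.Ico 1 (m + 1), (if (k : ℝ) ≤ a then (1 : ℝ) else 0) := by
        have hall : ∀ k ∈ Finset.Ico 1 (m + 1), (if (k : ℝ) ≤ a then (1 : ℝ) else 0) = 1 := by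
          intro k hk
          have hkm : k ≤ m := Nat.lt_succ_iff.1 (Finset.mem_Ico.1 hk).2
          have : (k : ℝ) ≤ m := Nat.cast_le.2 hkm
          rw [if_pos (this.trans (Nat.floor_le ha0))]
        rw [Finset.sum_congr rfl hall, Finset.sum_const, Nat.card_Ico, nsmul_eq_mul, mul_one]
        simp
      have hle : (m : ℝ) ≤ ∑ k ∈ Finset.Ico 1 N, (if (k : ℝ) ≤ a then (1 : ℝ) else 0) := by
        rw [hsum1]
        exact Finset.sum_le_sum_of_subset_of_nonneg hsub (by intro k _ _; positivity)
      have := Nat.lt_floor_add_one a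
      linarith
  have step1 : ∑ i : Fin N, min (N : ℝ) (ρ i ^ (-D)) ≤
      (N : ℝ) + ∑ k ∈ Finset.Ico 1 N, ∑ i : Fin N,
        (if (k : ℝ) ≤ ρ i ^ (-D) then (1 : ℝ) else 0) := by
    calc ∑ i : Fin N, min (N : ℝ) (ρ i ^ (-D))
        ≤ ∑ i : Fin N, (1 + ∑ k ∈ Finset.Ico 1 N,
            (if (k : ℝ) ≤ ρ i ^ (-D) then (1 : ℝ) else 0)) :=
          Finset.sum_le_sum fun i _ => key i
      _ = (N : ℝ) + ∑ i : Fin N, ∑ k ∈ Finset.Ico 1 N,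
            (if (k : ℝ) ≤ ρ i ^ (-D) then (1 : ℝ) else 0) := by
          rw [Finset.sum_add_distrib, Finset.sum_const, Finset.card_univ, Fintype.card_fin]
          simp
      _ = (N : ℝ) + ∑ k ∈ Finset.Ico 1 N, ∑ i : Fin N,
            (if (k : ℝ) ≤ ρ i ^ (-D) then (1 : ℝ) else 0) := by
          rw [Finset.sum_comm]
  -- bound each inner sum by the counting hypothesis
  have step2 : ∀ k ∈ Finset.Ico 1 N, ∑ i : Fin N,
      (if (k : ℝ) ≤ ρ i ^ (-D) then (1 : ℝ) else 0) ≤ C * N * (k : ℝ)⁻¹ := by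
    intro k hk
    obtain ⟨hk1, hkN⟩ := Finset.mem_Ico.1 hk
    have hk0 : (0 : ℝ) < k := by exact_mod_cast hk1
    have hk1' : (1 : ℝ) ≤ k := by exact_mod_cast hk1
    have hkN' : (k : ℝ) ≤ N := by exact_mod_cast hkN.le
    set s := (k : ℝ) ^ (-(1 / D)) with hs
    have hs0 : 0 ≤ s := Real.rpow_nonneg hk0.le _
    have hexp : -(1 / D) ≤ 0 := neg_nonpos.2 (by positivity)
    have hs1 : s ≤ 1 := Real.rpow_le_one_of_one_le_of_nonpos hk1' hexp
    have hsge : (N : ℝ) ^ (-(1 / D)) ≤ s :=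
      Real.rpow_le_rpow_of_nonpos hk0 hkN' hexp
    -- the implication: k ≤ ρ^(-D) → ρ ≤ s
    have himp : ∀ i, (k : ℝ) ≤ ρ i ^ (-D) → ρ i ≤ s := by
      intro i hi
      rcases eq_or_lt_of_le (hρ0 i) with h0 | h0
      · rw [← h0]; exact hs0
      · have h1 : (ρ i ^ (-D)) ^ (-(1 / D)) ≤ s :=
          Real.rpow_le_rpow_of_nonpos hk0 hi hexp
        have h2 : (ρ i ^ (-D)) ^ (-(1 / D)) = ρ i := by
          rw [← Real.rpow_mul (hρ0 i)]
          have hmul : -D * -(1 / D) = 1 := by field_simp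
          rw [hmul, Real.rpow_one]
        rwa [h2] at h1
    -- count
    have hcard : ∑ i : Fin N, (if (k : ℝ) ≤ ρ i ^ (-D) then (1 : ℝ) else 0) ≤
        (Nat.card {i : Fin N // dist (x i) η ≤ s} : ℝ) := by
      have hsum : (∑ i : Fin N, if (k : ℝ) ≤ ρ i ^ (-D) then (1 : ℝ) else 0)
          = ((Finset.univ.filter (fun i => (k : ℝ) ≤ ρ i ^ (-D))).card : ℝ) := by
        rw [Finset.sum_boole]
      rw [hsum, Nat.card_eq_fintype_card, Fintype.card_subtype]
      have hsubset : Finset.univ.filter (fun i => (k : ℝ) ≤ ρ i ^ (-D)) ⊆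
          Finset.univ.filter (fun i => dist (x i) η ≤ s) := by
        intro i hi
        simp only [Finset.mem_filter, Finset.mem_univ, true_and] at hi ⊢
        exact himp i hi
      exact_mod_cast Nat.cast_le.2 (Finset.card_le_card hsubset)
    have hsD : s ^ D = (k : ℝ)⁻¹ := by
      rw [hs, ← Real.rpow_mul hk0.le]
      rw [show -(1 / D) * D = -1 by field_simp]
      rw [Real.rpow_neg_one]
    calc ∑ i : Fin N, (if (k : ℝ) ≤ ρ i ^ (-D) then (1 : ℝ) else 0)
        ≤ (Nat.card {i : Fin N // dist (x i) η ≤ s} : ℝ) := hcard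
      _ ≤ C * N * s ^ D := hcount η s hsge hs1
      _ = C * N * (k : ℝ)⁻¹ := by rw [hsD]
  -- harmonic sum bound
  have hharm : ∑ k ∈ Finset.Ico 1 N, ((k : ℝ))⁻¹ ≤ 1 + Real.log N := by
    have h1 : ∑ k ∈ Finset.Ico 1 N, ((k : ℝ))⁻¹ ≤ ∑ k ∈ Finset.Icc 1 N, ((k : ℝ))⁻¹ :=
      Finset.sum_le_sum_of_subset_of_nonneg (Finset.Ico_subset_Icc_self)
        (by intro k _ _; positivity)
    have h2 : ∑ k ∈ Finset.Icc 1 N, ((k : ℝ))⁻¹ = ((harmonic N : ℚ) : ℝ) := by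
      rw [harmonic_eq_sum_Icc]
      push_cast
      rfl
    have h3 := harmonic_le_one_add_log N
    linarith [h1, h2 ▸ h1]
  -- combine
  have hlogN : 0 ≤ Real.log N := Real.log_nonneg (by exact_mod_cast hN)
  have hNpos : (0 : ℝ) < N := by exact_mod_cast hN
  calc ∑ i : Fin N, min (N : ℝ) (ρ i ^ (-D))
      ≤ (N : ℝ) + ∑ k ∈ Finset.Ico 1 N, ∑ i : Fin N,
        (if (k : ℝ) ≤ ρ i ^ (-D) then (1 : ℝ) else 0) := step1
    _ ≤ (N : ℝ) + ∑ k ∈ Finset.Ico 1 N, C * N * (k : ℝ)⁻¹ := by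
        gcongr with k hk
        exact step2 k hk
    _ = (N : ℝ) + C * N * ∑ k ∈ Finset.Ico 1 N, ((k : ℝ))⁻¹ := by
        rw [Finset.mul_sum]
    _ ≤ (N : ℝ) + C * N * (1 + Real.log N) := by
        gcongr
    _ ≤ (1 + C) * N * (1 + Real.log N) := by nlinarith
end

section
/- Let Γ be a group equipped with a left-invariant metric d; write |g| = d(1,g) and (x,y)_w = (d(x,w) + d(y,w) − d(x,y))/2 for the Gromov product. Assume: (i) there is δ ≥ 0 such that (x,y)_w ≥ min((x,z)_w, (y,z)_w) − δ for all x, y, z, w ∈ Γ; (ii) there is K ≥ 0 such that any two points x, y ∈ Γ are joined by a K-rough geodesic, i.e. a map γ : [0, d(x,y)] → Γ with γ(0) = x, γ(d(x,y)) = y and |d(γ(s),γ(t)) − |s−t|| ≤ K for all s, t; (iii) the ball B(1,r) = {g ∈ Γ : |g| ≤ r} is finite for every r > 0; (iv) there are a > 0 and α > 0 such that #B(1,R) ≥ a·e^{αR} for all R ≥ 0. Then there exists τ > 0 such that for every g₀, h ∈ Γ there is g ∈ Γ with d(g,g₀) ≤ τ and |gh| ≥ |g| + |h| − 2τ. -/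
open Set

private lemma counting_lemma {Γ : Type*} [Group Γ] [MetricSpace Γ]
    (hinv : ∀ g x y : Γ, dist (g * x) (g * y) = dist x y)
    (δ : ℝ) (hδ : 0 ≤ δ)
    (hhyp : ∀ x y z w : Γ,
      min ((dist x w + dist z w - dist x z) / 2) ((dist y w + dist z w - dist y z) / 2) - δ ≤
        (dist x w + dist y w - dist x y) / 2)
    (K : ℝ) (hK : 0 ≤ K)
    (hgeo : ∀ x y : Γ, ∃ γ : ℝ → Γ, γ 0 = x ∧ γ (dist x y) = y ∧
      ∀ s ∈ Set.Icc (0 : ℝ) (dist x y), ∀ t ∈ Set.Icc (0 : ℝ) (dist x y),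
        abs (dist (γ s) (γ t) - abs (s - t)) ≤ K)
    (hfin : ∀ r : ℝ, {g : Γ | dist 1 g ≤ r}.Finite)
    (R T : ℝ) (hT : 0 ≤ T)
    (A : Set Γ)
    (hAR : ∀ x ∈ A, dist 1 x ≤ R)
    (hAT : ∀ x ∈ A, T ≤ dist 1 x)
    (hpp : ∀ x ∈ A, ∀ y ∈ A, T ≤ (dist 1 x + dist 1 y - dist x y) / 2) :
    A.ncard ≤ {z : Γ | dist 1 z ≤ 4*K + 4*δ}.ncard * {z : Γ | dist 1 z ≤ R - T + K}.ncard := by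
  classical
  rcases A.eq_empty_or_nonempty with hAe | ⟨x₀, hx₀⟩
  · simp [hAe]
  · choose γ hγ0 hγ1 hγK using hgeo
    set p : Γ → Γ := fun x => γ 1 x T with hp
    have hfact : ∀ x ∈ A, T - K ≤ dist 1 (p x) ∧ dist 1 (p x) ≤ T + K ∧
        dist (p x) x ≤ dist 1 x - T + K := by
      intro x hx
      have hTx := hAT x hx
      have h0m : (0:ℝ) ∈ Set.Icc (0:ℝ) (dist 1 x) := ⟨le_refl _, dist_nonneg⟩
      have hTm : T ∈ Set.Icc (0:ℝ) (dist 1 x) := ⟨hT, hTx⟩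
      have hdm : dist 1 x ∈ Set.Icc (0:ℝ) (dist 1 x) := ⟨dist_nonneg, le_refl _⟩
      have h1 := hγK 1 x 0 h0m T hTm
      rw [hγ0 1 x] at h1
      have habs1 : |(0:ℝ) - T| = T := by rw [zero_sub, abs_neg, abs_of_nonneg hT]
      rw [habs1, abs_le] at h1
      have h2 := hγK 1 x T hTm (dist 1 x) hdm
      rw [hγ1 1 x] at h2
      have habs2 : |T - dist 1 x| = dist 1 x - T := by
        rw [abs_of_nonpos (by linarith)]; ring
      rw [habs2, abs_le] at h2
      exact ⟨by linarith [h1.1], by linarith [h1.2], by linarith [h2.2]⟩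
    have hclose : ∀ x ∈ A, ∀ y ∈ A, dist (p x) (p y) ≤ 4*K + 4*δ := by
      intro x hx y hy
      obtain ⟨fx1, fx2, fx3⟩ := hfact x hx
      obtain ⟨fy1, fy2, fy3⟩ := hfact y hy
      have h1 := hhyp (p x) y x 1
      have h2 := hhyp (p x) (p y) y 1
      have hATx := hAT x hx
      have a1 : T - K ≤ (dist (p x) 1 + dist x 1 - dist (p x) x) / 2 := by
        rw [dist_comm (p x) 1, dist_comm x 1]; linarith
      have a2 : T - K ≤ (dist y 1 + dist x 1 - dist y x) / 2 := by
        have := hpp y hy x hx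
        rw [dist_comm y 1, dist_comm x 1]; linarith [dist_comm y x]
      have m1 : T - K ≤ min ((dist (p x) 1 + dist x 1 - dist (p x) x) / 2)
          ((dist y 1 + dist x 1 - dist y x) / 2) := le_min a1 a2
      have b1 : T - K - δ ≤ (dist (p x) 1 + dist y 1 - dist (p x) y) / 2 := by linarith
      have b2 : T - K ≤ (dist (p y) 1 + dist y 1 - dist (p y) y) / 2 := by
        rw [dist_comm (p y) 1, dist_comm y 1]; linarith
      have m2 : T - K - δ ≤ min ((dist (p x) 1 + dist y 1 - dist (p x) y) / 2)
          ((dist (p y) 1 + dist y 1 - dist (p y) y) / 2) := le_min b1 (by linarith)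
      have hpx1 : dist (p x) 1 ≤ T + K := by rw [dist_comm]; exact fx2
      have hpy1 : dist (p y) 1 ≤ T + K := by rw [dist_comm]; exact fy2
      linarith
    haveI hfin1 : Finite ↥{z : Γ | dist 1 z ≤ 4*K + 4*δ} := (hfin _).to_subtype
    haveI hfin2 : Finite ↥{z : Γ | dist 1 z ≤ R - T + K} := (hfin _).to_subtype
    have hmem1 : ∀ x ∈ A, (p x₀)⁻¹ * p x ∈ {z : Γ | dist 1 z ≤ 4*K + 4*δ} := by
      intro x hx
      have h1 := hinv (p x₀) 1 ((p x₀)⁻¹ * p x)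
      rw [mul_one, mul_inv_cancel_left] at h1
      show dist 1 ((p x₀)⁻¹ * p x) ≤ 4*K + 4*δ
      rw [← h1]; exact hclose x₀ hx₀ x hx
    have hmem2 : ∀ x ∈ A, (p x)⁻¹ * x ∈ {z : Γ | dist 1 z ≤ R - T + K} := by
      intro x hx
      have h1 := hinv (p x) 1 ((p x)⁻¹ * x)
      rw [mul_one, mul_inv_cancel_left] at h1
      show dist 1 ((p x)⁻¹ * x) ≤ R - T + K
      rw [← h1]
      have h3 := (hfact x hx).2.2
      have h4 := hAR x hx
      linarith
    set F : ↥A → ↥{z : Γ | dist 1 z ≤ 4*K + 4*δ} × ↥{z : Γ | dist 1 z ≤ R - T + K} :=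
      fun x => (⟨(p x₀)⁻¹ * p ↑x, hmem1 ↑x x.2⟩, ⟨(p ↑x)⁻¹ * ↑x, hmem2 ↑x x.2⟩) with hF
    have hFinj : Function.Injective F := by
      intro x y hxy
      rw [hF] at hxy
      rw [Prod.ext_iff] at hxy
      obtain ⟨h1, h2⟩ := hxy
      rw [Subtype.ext_iff] at h1 h2
      simp only at h1 h2
      have hpxy : p ↑x = p ↑y := mul_left_cancel h1
      have hxyv : (↑x : Γ) = ↑y := by
        rw [hpxy] at h2; exact mul_left_cancel h2
      exact Subtype.ext hxyv
    have hcard := Nat.card_le_card_of_injective F hFinj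
    rw [Nat.card_prod] at hcard
    simpa [Nat.card_coe_set_eq] using hcard

private lemma exists_good_radius {Γ : Type*} [Group Γ] [MetricSpace Γ]
    (hfin : ∀ r : ℝ, {g : Γ | dist 1 g ≤ r}.Finite)
    (a α : ℝ) (ha : 0 < a) (hα : 0 < α)
    (hgrowth : ∀ R : ℝ, 0 ≤ R → a * Real.exp (α * R) ≤ Nat.card {g : Γ | dist 1 g ≤ R})
    (M : ℕ) (hM : 1 ≤ M) (β : ℝ) (hβ : 0 < β)
    (hMβ : (M : ℝ) * Real.exp α ≤ Real.exp (α * β)) (τ₁ : ℝ) (hτ₁ : 0 < τ₁) :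
    ∃ τ : ℝ, τ₁ ≤ τ ∧
      M * {g : Γ | dist 1 g ≤ τ - β}.ncard < {g : Γ | dist 1 g ≤ τ}.ncard := by
  by_contra hcon
  push_neg at hcon
  set N : ℝ → ℕ := fun r => {g : Γ | dist 1 g ≤ r}.ncard with hN
  have hstep : ∀ k : ℕ, N (τ₁ + k * β) ≤ M ^ k * N τ₁ := by
    intro k
    induction k with
    | zero => simp
    | succ n ih =>
      have h1 : τ₁ ≤ τ₁ + ((n+1 : ℕ) : ℝ) * β := by
        have : (0:ℝ) ≤ ((n+1:ℕ):ℝ) * β := by positivity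
        linarith
      have h2 := hcon _ h1
      have h3 : τ₁ + ((n+1 : ℕ) : ℝ) * β - β = τ₁ + (n : ℕ) * β := by push_cast; ring
      rw [h3] at h2
      calc N (τ₁ + ((n+1:ℕ):ℝ) * β) ≤ M * N (τ₁ + (n:ℕ) * β) := h2
        _ ≤ M * (M ^ n * N τ₁) := Nat.mul_le_mul_left _ ih
        _ = M ^ (n+1) * N τ₁ := by ring
  obtain ⟨k, hk⟩ := exists_nat_gt ((N τ₁ : ℝ) / (a * Real.exp (α * τ₁) * α))
  have hτk : (0:ℝ) ≤ τ₁ + k * β := by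
    have : (0:ℝ) ≤ (k:ℝ) * β := by positivity
    linarith
  have hg := hgrowth _ hτk
  rw [Nat.card_coe_set_eq] at hg
  have h2 : (N (τ₁ + k * β) : ℝ) ≤ (M:ℝ) ^ k * N τ₁ := by exact_mod_cast hstep k
  have hexp : Real.exp (α * (τ₁ + k * β)) = Real.exp (α * τ₁) * Real.exp (α * β) ^ k := by
    rw [← Real.exp_nat_mul, ← Real.exp_add]
    ring_nf
  have hMk : ((M:ℝ) * Real.exp α) ^ k ≤ Real.exp (α * β) ^ k := by
    apply pow_le_pow_left₀ (by positivity) hMβ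
  have hMk2 : ((M:ℝ) * Real.exp α) ^ k = (M:ℝ)^k * Real.exp (α * k) := by
    rw [mul_pow, mul_comm α (k:ℝ), Real.exp_nat_mul]
  have hMkpos : (0:ℝ) < (M:ℝ)^k := by positivity
  have hEpos : (0:ℝ) < Real.exp (α * τ₁) := Real.exp_pos _
  -- chain: a * exp(ατ₁) * M^k * exp(αk) ≤ a * exp(ατ₁) * exp(αβ)^k = a*exp(α(τ₁+kβ)) ≤ N ≤ M^k N τ₁
  have hchain : a * Real.exp (α * τ₁) * ((M:ℝ)^k * Real.exp (α * k)) ≤ (M:ℝ)^k * N τ₁ := by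
    calc a * Real.exp (α * τ₁) * ((M:ℝ)^k * Real.exp (α * k))
        = a * Real.exp (α * τ₁) * (((M:ℝ) * Real.exp α) ^ k) := by rw [hMk2]
      _ ≤ a * Real.exp (α * τ₁) * Real.exp (α * β) ^ k := by
          apply mul_le_mul_of_nonneg_left hMk (by positivity)
      _ = a * Real.exp (α * (τ₁ + k * β)) := by rw [hexp]; ring
      _ ≤ (N (τ₁ + k * β) : ℝ) := hg
      _ ≤ (M:ℝ)^k * N τ₁ := h2
  have hfin2 : a * Real.exp (α * τ₁) * Real.exp (α * k) ≤ (N τ₁ : ℝ) := by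
    have := (mul_le_mul_iff_right₀ hMkpos).mp (by linarith [hchain] : (M:ℝ)^k * (a * Real.exp (α * τ₁) * Real.exp (α * k)) ≤ (M:ℝ)^k * (N τ₁ : ℝ))
    exact this
  have hexpk : α * k + 1 ≤ Real.exp (α * k) := Real.add_one_le_exp _
  have hklt : (N τ₁ : ℝ) < a * Real.exp (α * τ₁) * α * k := by
    rw [div_lt_iff₀ (by positivity)] at hk
    linarith
  nlinarith [mul_le_mul_of_nonneg_left hexpk (by positivity : (0:ℝ) ≤ a * Real.exp (α * τ₁)),
    mul_pos ha hEpos, hα.le]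



/-- Preventing cancellation: in a group `Γ` with a left-invariant hyperbolic metric which is
roughly geodesic, has finite balls and exponential growth, there is `τ > 0` such that for all
`g₀, h ∈ Γ` there exists `g` with `d(g,g₀) ≤ τ` and `|gh| ≥ |g| + |h| − 2τ`. -/
theorem preventing_cancellation
    {Γ : Type*} [Group Γ] [MetricSpace Γ]
    (hinv : ∀ g x y : Γ, dist (g * x) (g * y) = dist x y)
    (δ : ℝ) (hδ : 0 ≤ δ)
    (hhyp : ∀ x y z w : Γ,
      min ((dist x w + dist z w - dist x z) / 2) ((dist y w + dist z w - dist y z) / 2) - δ ≤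
        (dist x w + dist y w - dist x y) / 2)
    (K : ℝ) (hK : 0 ≤ K)
    (hgeo : ∀ x y : Γ, ∃ γ : ℝ → Γ, γ 0 = x ∧ γ (dist x y) = y ∧
      ∀ s ∈ Set.Icc (0 : ℝ) (dist x y), ∀ t ∈ Set.Icc (0 : ℝ) (dist x y),
        abs (dist (γ s) (γ t) - abs (s - t)) ≤ K)
    (hfin : ∀ r : ℝ, {g : Γ | dist 1 g ≤ r}.Finite)
    (a α : ℝ) (ha : 0 < a) (hα : 0 < α)
    (hgrowth : ∀ R : ℝ, 0 ≤ R → a * Real.exp (α * R) ≤ Nat.card {g : Γ | dist 1 g ≤ R}) :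
    ∃ τ : ℝ, 0 < τ ∧ ∀ g₀ h : Γ, ∃ g : Γ, dist g g₀ ≤ τ ∧
      dist 1 g + dist 1 h - 2 * τ ≤ dist 1 (g * h) := by
  classical
  set D : ℝ := 4*K + 4*δ with hD
  set ND : ℕ := {z : Γ | dist 1 z ≤ D}.ncard with hNDdef
  have hND1 : 1 ≤ ND := by
    have hne : ({z : Γ | dist 1 z ≤ D}).Nonempty := ⟨1, by
      show dist (1:Γ) 1 ≤ D
      rw [dist_self, hD]; positivity⟩
    have h0 := (Set.ncard_pos (hfin D)).mpr hne
    rw [← hNDdef] at h0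
    omega
  set M : ℕ := 3 * ND with hMdef
  have hM1 : 1 ≤ M := by omega
  have hMR : (1:ℝ) ≤ (M:ℝ) := by exact_mod_cast hM1
  set β : ℝ := Real.log M / α + 1 with hβdef
  have hlogM : 0 ≤ Real.log M := Real.log_nonneg hMR
  have hβ : 0 < β := by
    have h0 : 0 ≤ Real.log M / α := div_nonneg hlogM hα.le
    rw [hβdef]; linarith
  set c : ℝ := δ + K + β with hcdef
  have hc0 : 0 < c := by rw [hcdef]; linarith
  have hcδ : δ ≤ c := by rw [hcdef]; linarith
  have hcδK : δ + K ≤ c := by rw [hcdef]; linarith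
  set τ₁ : ℝ := 3*c + 2*δ + 1 with hτ₁def
  have hτ₁pos : 0 < τ₁ := by rw [hτ₁def]; linarith
  have hMβ : (M : ℝ) * Real.exp α ≤ Real.exp (α * β) := by
    have h1 : α * β = Real.log M + α := by
      rw [hβdef]; field_simp
    rw [h1, Real.exp_add, Real.exp_log (by linarith : (0:ℝ) < (M:ℝ))]
  obtain ⟨τ, hττ₁, hτratio⟩ :=
    exists_good_radius hfin a α ha hα hgrowth M hM1 β hβ hMβ τ₁ hτ₁pos
  have hτ3c : 3*c + 2*δ + 1 ≤ τ := by rw [hτ₁def] at hττ₁; exact hττ₁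
  have hτpos : 0 < τ := by linarith
  refine ⟨τ, hτpos, ?_⟩
  intro g₀ h
  by_contra hcon
  push_neg at hcon
  have hdju : ∀ u : Γ, dist (g₀ * u) g₀ = dist 1 u := by
    intro u
    have h1 := hinv g₀ u 1
    rw [mul_one] at h1
    rw [h1, dist_comm]
  have einv : ∀ u : Γ, dist u⁻¹ 1 = dist 1 u := by
    intro u
    have h1 := hinv u u⁻¹ 1
    simp only [mul_inv_cancel, mul_one] at h1
    exact h1.symm
  have hinvnorm : ∀ u : Γ, dist 1 u⁻¹ = dist 1 u := by
    intro u; rw [← einv u, dist_comm]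
  -- the key inequality (★)
  have star : ∀ u : Γ, dist 1 u ≤ τ →
      min (dist 1 u - (dist 1 u + dist 1 g₀⁻¹ - dist u g₀⁻¹) / 2) τ - δ
        ≤ (dist 1 u + dist 1 h - dist u⁻¹ h) / 2 := by
    intro u hu
    have hg := hcon (g₀ * u) (by rw [hdju u]; exact hu)
    have hh := hhyp 1 (u * h) g₀⁻¹ u
    have e1 : dist (u * h) u = dist 1 h := by
      have h1 := hinv u h 1
      rw [mul_one] at h1
      rw [h1, dist_comm]
    have e2 : dist g₀⁻¹ u = dist 1 (g₀ * u) := by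
      have h1 := hinv g₀ g₀⁻¹ u
      rw [mul_inv_cancel] at h1
      exact h1.symm
    have e3 : dist (u * h) g₀⁻¹ = dist 1 (g₀ * u * h) := by
      have h1 := hinv g₀ (u * h) g₀⁻¹
      rw [mul_inv_cancel, ← mul_assoc] at h1
      rw [← h1, dist_comm]
    have e4 : dist 1 (u * h) = dist u⁻¹ h := by
      have h1 := hinv u⁻¹ 1 (u * h)
      rw [mul_one, inv_mul_cancel_left] at h1
      exact h1.symm
    rw [e1, e2, e3, e4] at hh
    have e2' : dist u g₀⁻¹ = dist 1 (g₀ * u) := by rw [dist_comm]; exact e2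
    have hA1 : dist 1 u - (dist 1 u + dist 1 g₀⁻¹ - dist u g₀⁻¹) / 2
        = (dist 1 u + dist 1 (g₀ * u) - dist 1 g₀⁻¹) / 2 := by rw [e2']; ring
    have hA2 : τ ≤ (dist 1 h + dist 1 (g₀ * u) - dist 1 (g₀ * u * h)) / 2 := by linarith
    have hmin : min (dist 1 u - (dist 1 u + dist 1 g₀⁻¹ - dist u g₀⁻¹) / 2) τ ≤
        min ((dist 1 u + dist 1 (g₀ * u) - dist 1 g₀⁻¹) / 2)
          ((dist 1 h + dist 1 (g₀ * u) - dist 1 (g₀ * u * h)) / 2) := by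
      apply le_min
      · exact (min_le_left _ _).trans (le_of_eq hA1)
      · exact (min_le_right _ _).trans hA2
    linarith
  -- good set
  set G : Set Γ := {u : Γ | dist 1 u ≤ τ ∧
      τ - 2*c ≤ dist 1 u - (dist 1 u + dist 1 g₀⁻¹ - dist u g₀⁻¹) / 2} with hGdef
  have hGmem : ∀ u : Γ, u ∈ G ↔ (dist 1 u ≤ τ ∧
      τ - 2*c ≤ dist 1 u - (dist 1 u + dist 1 g₀⁻¹ - dist u g₀⁻¹) / 2) := fun u => Iff.rfl
  have hGstar : ∀ u ∈ G, τ - 2*c - δ ≤ (dist 1 u + dist 1 h - dist u⁻¹ h) / 2 := by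
    intro u hu
    obtain ⟨hu1, hu2⟩ := (hGmem u).mp hu
    have hs := star u hu1
    have hm : τ - 2*c ≤ min (dist 1 u - (dist 1 u + dist 1 g₀⁻¹ - dist u g₀⁻¹) / 2) τ :=
      le_min hu2 (by linarith)
    linarith
  have hGnorm : ∀ u ∈ G, τ - 2*c ≤ dist 1 u := by
    intro u hu
    obtain ⟨hu1, hu2⟩ := (hGmem u).mp hu
    have htri : dist u g₀⁻¹ ≤ dist u 1 + dist 1 g₀⁻¹ := dist_triangle u 1 g₀⁻¹
    have hcm : dist u 1 = dist 1 u := dist_comm u 1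
    linarith
  by_cases hpair : ∃ u₁ ∈ G, ∃ u₂ ∈ G, u₁ ≠ u₂ ∧
      (dist 1 u₁⁻¹ + dist 1 u₂⁻¹ - dist u₁⁻¹ u₂⁻¹) / 2 ≤ c
  · obtain ⟨u₁, hu₁, u₂, hu₂, hne, hle⟩ := hpair
    have m1 := hGstar u₁ hu₁
    have m2 := hGstar u₂ hu₂
    have hp := hhyp u₁⁻¹ u₂⁻¹ h 1
    have l1 : τ - 2*c - δ ≤ (dist u₁⁻¹ 1 + dist h 1 - dist u₁⁻¹ h) / 2 := by
      rw [einv u₁, dist_comm h 1]; exact m1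
    have l2 : τ - 2*c - δ ≤ (dist u₂⁻¹ 1 + dist h 1 - dist u₂⁻¹ h) / 2 := by
      rw [einv u₂, dist_comm h 1]; exact m2
    have hm := le_min l1 l2
    have hfinal : τ - 2*c - 2*δ ≤ (dist u₁⁻¹ 1 + dist u₂⁻¹ 1 - dist u₁⁻¹ u₂⁻¹) / 2 := by
      linarith
    rw [einv u₁, einv u₂] at hfinal
    have hle' : (dist 1 u₁ + dist 1 u₂ - dist u₁⁻¹ u₂⁻¹) / 2 ≤ c := by
      rw [hinvnorm u₁, hinvnorm u₂] at hle
      exact hle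
    linarith
  · push_neg at hpair
    have hcount := counting_lemma hinv δ hδ hhyp K hK hgeo hfin τ c hc0.le
      ((fun u : Γ => u⁻¹) '' G)
      (by rintro x ⟨u, hu, rfl⟩
          show dist 1 u⁻¹ ≤ τ
          rw [hinvnorm u]; exact ((hGmem u).mp hu).1)
      (by rintro x ⟨u, hu, rfl⟩
          show c ≤ dist 1 u⁻¹
          rw [hinvnorm u]
          have := hGnorm u hu; linarith)
      (by rintro x ⟨u₁, hu₁, rfl⟩ y ⟨u₂, hu₂, rfl⟩
          show c ≤ (dist 1 u₁⁻¹ + dist 1 u₂⁻¹ - dist u₁⁻¹ u₂⁻¹) / 2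
          by_cases he : u₁ = u₂
          · subst he
            rw [dist_self, hinvnorm u₁]
            have := hGnorm u₁ hu₁
            linarith
          · exact (hpair u₁ hu₁ u₂ hu₂ he).le)
    have hGA : G.ncard = ((fun u : Γ => u⁻¹) '' G).ncard :=
      (Set.ncard_image_of_injective G (fun x y hxy => inv_injective hxy)).symm
    set B1 : Set Γ := {u : Γ | dist 1 u ≤ τ - c} with hB1def
    set B2 : Set Γ := {u : Γ | dist 1 u ≤ τ ∧
        c ≤ (dist 1 u + dist 1 g₀⁻¹ - dist u g₀⁻¹) / 2} with hB2def
    have hB2mem : ∀ u : Γ, u ∈ B2 ↔ (dist 1 u ≤ τ ∧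
        c ≤ (dist 1 u + dist 1 g₀⁻¹ - dist u g₀⁻¹) / 2) := fun u => Iff.rfl
    have hcount2 := counting_lemma hinv δ hδ hhyp K hK hgeo hfin τ (c - δ) (by linarith) B2
      (fun x hx => ((hB2mem x).mp hx).1)
      (by intro x hx
          obtain ⟨hx1, hx2⟩ := (hB2mem x).mp hx
          have htri : dist 1 g₀⁻¹ ≤ dist 1 x + dist x g₀⁻¹ := dist_triangle 1 x g₀⁻¹
          linarith)
      (by intro x hx y hy
          obtain ⟨hx1, hx2⟩ := (hB2mem x).mp hx
          obtain ⟨hy1, hy2⟩ := (hB2mem y).mp hy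
          have hp := hhyp x y g₀⁻¹ 1
          have a1 : c ≤ (dist x 1 + dist g₀⁻¹ 1 - dist x g₀⁻¹) / 2 := by
            rw [dist_comm x 1, dist_comm g₀⁻¹ 1]; exact hx2
          have a2 : c ≤ (dist y 1 + dist g₀⁻¹ 1 - dist y g₀⁻¹) / 2 := by
            rw [dist_comm y 1, dist_comm g₀⁻¹ 1]; exact hy2
          have hm := le_min a1 a2
          have hgoal : c - δ ≤ (dist x 1 + dist y 1 - dist x y) / 2 := by linarith
          rw [dist_comm x 1, dist_comm y 1] at hgoal
          exact hgoal)
    have hcover : {u : Γ | dist 1 u ≤ τ} ⊆ B1 ∪ B2 ∪ G := by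
      intro u hu
      have hu' : dist 1 u ≤ τ := hu
      simp only [Set.mem_union]
      by_cases h1 : τ - 2*c ≤ dist 1 u - (dist 1 u + dist 1 g₀⁻¹ - dist u g₀⁻¹) / 2
      · exact Or.inr ((hGmem u).mpr ⟨hu', h1⟩)
      · push_neg at h1
        by_cases h2 : c ≤ (dist 1 u + dist 1 g₀⁻¹ - dist u g₀⁻¹) / 2
        · exact Or.inl (Or.inr ((hB2mem u).mpr ⟨hu', h2⟩))
        · push_neg at h2
          have hB1u : dist 1 u ≤ τ - c := by linarith
          exact Or.inl (Or.inl hB1u)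
    have hGfin : G.Finite := (hfin τ).subset (fun u hu => ((hGmem u).mp hu).1)
    have hB2fin : B2.Finite := (hfin τ).subset (fun u hu => ((hB2mem u).mp hu).1)
    have hB1fin : B1.Finite := hfin (τ - c)
    have hcard1 : {u : Γ | dist 1 u ≤ τ}.ncard ≤ (B1 ∪ B2 ∪ G).ncard :=
      Set.ncard_le_ncard hcover ((hB1fin.union hB2fin).union hGfin)
    have hsum : (B1 ∪ B2 ∪ G).ncard ≤ B1.ncard + B2.ncard + G.ncard := by
      calc (B1 ∪ B2 ∪ G).ncard ≤ (B1 ∪ B2).ncard + G.ncard := Set.ncard_union_le _ _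
        _ ≤ B1.ncard + B2.ncard + G.ncard := by
            have := Set.ncard_union_le B1 B2; omega
    have hmono : ∀ r r' : ℝ, r ≤ r' →
        {z : Γ | dist 1 z ≤ r}.ncard ≤ {z : Γ | dist 1 z ≤ r'}.ncard := by
      intro r r' hrr
      exact Set.ncard_le_ncard (fun z hz => le_trans hz hrr) (hfin r')
    have hidx : τ - (c - δ) + K = τ - c + δ + K := by ring
    rw [hidx] at hcount2
    set Q : ℕ := {z : Γ | dist 1 z ≤ τ - c + δ + K}.ncard with hQdef
    have hB1card : B1.ncard ≤ ND * Q := by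
      have h1 : B1.ncard ≤ Q := by
        rw [hQdef, hB1def]
        exact hmono (τ - c) (τ - c + δ + K) (by linarith)
      calc B1.ncard ≤ Q := h1
        _ ≤ ND * Q := Nat.le_mul_of_pos_left _ (by omega)
    have hB2card : B2.ncard ≤ ND * Q := hcount2
    have hGcard : G.ncard ≤ ND * Q := by
      rw [hGA]
      calc ((fun u : Γ => u⁻¹) '' G).ncard
          ≤ ND * {z : Γ | dist 1 z ≤ τ - c + K}.ncard := hcount
        _ ≤ ND * Q := by
            rw [hQdef]
            exact Nat.mul_le_mul_left _ (hmono _ _ (by linarith))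
    have hidx2 : τ - c + δ + K = τ - β := by rw [hcdef]; ring
    have hQβ : Q = {z : Γ | dist 1 z ≤ τ - β}.ncard := by rw [hQdef, hidx2]
    have hfinal2 : {u : Γ | dist 1 u ≤ τ}.ncard ≤ M * {z : Γ | dist 1 z ≤ τ - β}.ncard := by
      rw [← hQβ, hMdef]
      have hring : 3 * ND * Q = ND * Q + ND * Q + ND * Q := by ring
      linarith [hcard1, hsum, hB1card, hB2card, hGcard, hring]
    exact absurd hτratio (not_lt.mpr hfinal2)
end

section
/- Let (X,ρ_X) be a separable metric space, μ a Borel probability measure on X with full support (i.e. μ(B(x,ε)) > 0 for every x ∈ X and ε > 0), let (Y,ρ_Y) be a complete metric space, and let F : X → Y be a Borel measurable map. Suppose there are C ≥ 0 and α ∈ (0,1] such that ρ_Y(F(ξ),F(η)) ≤ C·ρ_X(ξ,η)^α for (μ⊗μ)-almost every pair (ξ,η) ∈ X × X. Then there exists a map H : X → Y satisfying ρ_Y(H(ξ),H(η)) ≤ C·ρ_X(ξ,η)^α for all ξ, η ∈ X, such that F = H μ-almost everywhere. -/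
open MeasureTheory Filter Metric Set Topology

/-- Helper: pass to the limit `ε → 0⁺`. -/
private lemma le_limit_helper {a C α d : ℝ} (hα : 0 < α) (hd : 0 ≤ d) (hC : 0 ≤ C)
    (h : ∀ ε : ℝ, 0 < ε → a ≤ C * ε ^ α + C * (d + 2 * ε) ^ α + 2 * ε) :
    a ≤ C * d ^ α := by
  have h1 : Tendsto (fun ε : ℝ => ε ^ α) (𝓝[>] (0 : ℝ)) (𝓝 0) := by
    have := (Real.continuousAt_rpow_const 0 α (Or.inr hα.le)).tendsto
    rw [Real.zero_rpow hα.ne'] at this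
    exact this.mono_left nhdsWithin_le_nhds
  have h2 : Tendsto (fun ε : ℝ => (d + 2 * ε) ^ α) (𝓝[>] (0 : ℝ)) (𝓝 (d ^ α)) := by
    have hb : Tendsto (fun ε : ℝ => d + 2 * ε) (𝓝 (0 : ℝ)) (𝓝 d) := by
      have : Continuous fun ε : ℝ => d + 2 * ε := by continuity
      simpa using this.tendsto 0
    have := (Real.continuousAt_rpow_const d α (Or.inr hα.le)).tendsto.comp hb
    exact this.mono_left nhdsWithin_le_nhds
  have h3 : Tendsto (fun ε : ℝ => C * ε ^ α + C * (d + 2 * ε) ^ α + 2 * ε)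
      (𝓝[>] (0 : ℝ)) (𝓝 (C * 0 + C * d ^ α + 2 * 0)) := by
    exact ((h1.const_mul C).add (h2.const_mul C)).add
      ((tendsto_id.const_mul 2).mono_left nhdsWithin_le_nhds)
  rw [show C * 0 + C * d ^ α + 2 * 0 = C * d ^ α by ring] at h3
  refine ge_of_tendsto h3 ?_
  filter_upwards [self_mem_nhdsWithin] with ε hε
  exact h ε hε

/-- Helper: a set of nonzero measure meets any a.e. property. -/
private lemma exists_mem_of_ae {X : Type*} [MeasurableSpace X] {μ : Measure X}
    {s : Set X} (hs : μ s ≠ 0) {p : X → Prop} (hp : ∀ᵐ x ∂μ, p x) :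
    ∃ x ∈ s, p x := by
  by_contra h
  push_neg at h
  apply hs
  refine measure_mono_null (fun x hx => ?_) hp
  exact h x hx

/-- A Borel map `F` from a separable metric space with a fully supported probability measure
to a complete metric space, which is Hölder `(C,α)` almost everywhere on pairs, agrees almost
everywhere with a map `H` that is Hölder `(C,α)` everywhere. -/
theorem ae_holder_upgrade
    {X : Type*} [MetricSpace X] [TopologicalSpace.SeparableSpace X]
    [MeasurableSpace X] [BorelSpace X]
    {Y : Type*} [MetricSpace Y] [CompleteSpace Y] [MeasurableSpace Y] [BorelSpace Y]
    (μ : Measure X) [IsProbabilityMeasure μ]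
    (hfull : ∀ (x : X) (ε : ℝ), 0 < ε → 0 < μ (Metric.ball x ε))
    (F : X → Y) (hF : Measurable F)
    (C α : ℝ) (hC : 0 ≤ C) (hα : 0 < α) (hα1 : α ≤ 1)
    (hHolder : ∀ᵐ p ∂(μ.prod μ), dist (F p.1) (F p.2) ≤ C * dist p.1 p.2 ^ α) :
    ∃ H : X → Y, (∀ ξ η : X, dist (H ξ) (H η) ≤ C * dist ξ η ^ α) ∧ F =ᵐ[μ] H := by
  rcases isEmpty_or_nonempty X with hX | hX
  · exact ⟨F, fun ξ => isEmptyElim ξ, EventuallyEq.refl _ _⟩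
  haveI : Nonempty Y := ⟨F (Classical.arbitrary X)⟩
  -- the set of good points
  set G : Set X := {ξ | ∀ᵐ η ∂μ, dist (F ξ) (F η) ≤ C * dist ξ η ^ α} with hGdef
  have hG : ∀ᵐ ξ ∂μ, ξ ∈ G := Measure.ae_ae_of_ae_prod hHolder
  -- F is Hölder on G
  have hFG : ∀ ξ ∈ G, ∀ η ∈ G, dist (F ξ) (F η) ≤ C * dist ξ η ^ α := by
    intro ξ hξ η hη
    refine le_limit_helper hα dist_nonneg hC (fun ε hε => ?_)
    have hξ' : ∀ᵐ η' ∂μ, dist (F ξ) (F η') ≤ C * dist ξ η' ^ α := hξ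
    have hη' : ∀ᵐ η' ∂μ, dist (F η) (F η') ≤ C * dist η η' ^ α := hη
    obtain ⟨ζ, hζball, hζ1, hζ2⟩ := exists_mem_of_ae
      (ne_of_gt (hfull ξ ε hε)) (hξ'.and hη')
    have hd1 : dist ξ ζ ≤ ε := le_of_lt (mem_ball'.mp hζball)
    have hd2 : dist η ζ ≤ dist ξ η + 2 * ε := by
      have := dist_triangle η ξ ζ
      rw [dist_comm η ξ] at this
      linarith
    calc dist (F ξ) (F η) ≤ dist (F ξ) (F ζ) + dist (F ζ) (F η) := dist_triangle _ _ _
      _ ≤ C * dist ξ ζ ^ α + C * dist η ζ ^ α := by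
          rw [dist_comm (F ζ) (F η)]; exact add_le_add hζ1 hζ2
      _ ≤ C * ε ^ α + C * (dist ξ η + 2 * ε) ^ α :=
          add_le_add (mul_le_mul_of_nonneg_left (Real.rpow_le_rpow dist_nonneg hd1 hα.le) hC)
            (mul_le_mul_of_nonneg_left (Real.rpow_le_rpow dist_nonneg hd2 hα.le) hC)
      _ ≤ C * ε ^ α + C * (dist ξ η + 2 * ε) ^ α + 2 * ε := by linarith
  -- G is dense
  have hGdense : Dense G := by
    intro x
    rw [Metric.mem_closure_iff]
    intro ε hε
    obtain ⟨y, hy, hyG⟩ := exists_mem_of_ae (ne_of_gt (hfull x ε hε)) hG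
    exact ⟨y, hyG, mem_ball'.mp hy⟩
  have hNeBot : ∀ x : X, (𝓝[G] x).NeBot := fun x =>
    mem_closure_iff_nhdsWithin_neBot.mp (hGdense x)
  -- the filters `map F (𝓝[G] x)` are Cauchy
  have hCauchy : ∀ x : X, Cauchy (Filter.map F (𝓝[G] x)) := by
    intro x
    rw [Metric.cauchy_iff]
    refine ⟨(hNeBot x).map F, fun ε hε => ?_⟩
    -- choose δ with C * (2δ)^α < ε
    have htend : Tendsto (fun δ : ℝ => C * (2 * δ) ^ α) (𝓝[>] (0 : ℝ)) (𝓝 0) := by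
      have hb : Tendsto (fun δ : ℝ => 2 * δ) (𝓝 (0 : ℝ)) (𝓝 0) := by
        simpa using (show Continuous fun δ : ℝ => 2 * δ from continuous_const.mul continuous_id).tendsto 0
      have := ((Real.continuousAt_rpow_const 0 α (Or.inr hα.le)).tendsto.comp hb).const_mul C
      rw [Real.zero_rpow hα.ne', mul_zero] at this
      exact this.mono_left nhdsWithin_le_nhds
    have : ∀ᶠ δ in 𝓝[>] (0 : ℝ), C * (2 * δ) ^ α < ε :=
      htend.eventually (eventually_lt_nhds hε)
    obtain ⟨δ, hδlt, hδpos⟩ := (this.and self_mem_nhdsWithin).exists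
    refine ⟨F '' (G ∩ ball x δ), ?_, ?_⟩
    · exact image_mem_map (inter_mem_nhdsWithin G (ball_mem_nhds x hδpos))
    · rintro _ ⟨a, ⟨haG, haB⟩, rfl⟩ _ ⟨b, ⟨hbG, hbB⟩, rfl⟩
      have hab : dist a b ≤ 2 * δ := by
        have := dist_triangle a x b
        have h1 := mem_ball.mp haB
        have h2 := mem_ball.mp hbB
        rw [dist_comm x b] at this
        linarith
      calc dist (F a) (F b) ≤ C * dist a b ^ α := hFG a haG b hbG
        _ ≤ C * (2 * δ) ^ α :=
            mul_le_mul_of_nonneg_left (Real.rpow_le_rpow dist_nonneg hab hα.le) hC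
        _ < ε := hδlt
  -- define H as the limit
  set H : X → Y := fun x => lim (Filter.map F (𝓝[G] x)) with hHdef
  have hHtendsto : ∀ x : X, Tendsto F (𝓝[G] x) (𝓝 (H x)) := fun x =>
    (hCauchy x).le_nhds_lim
  -- H = F on G
  have hHG : ∀ g ∈ G, H g = F g := by
    intro g hg
    haveI := hNeBot g
    refine tendsto_nhds_unique (hHtendsto g) ?_
    rw [tendsto_iff_dist_tendsto_zero]
    have hle : ∀ ζ ∈ G, dist (F ζ) (F g) ≤ C * dist ζ g ^ α := fun ζ hζ => by
      rw [dist_comm, dist_comm ζ g]; exact hFG g hg ζ hζ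
    have hbd : Tendsto (fun ζ => C * dist ζ g ^ α) (𝓝[G] g) (𝓝 0) := by
      have hdist : Tendsto (fun ζ => dist ζ g) (𝓝[G] g) (𝓝 0) :=
        (tendsto_iff_dist_tendsto_zero.mp tendsto_id).mono_left nhdsWithin_le_nhds
      have := ((Real.continuousAt_rpow_const 0 α (Or.inr hα.le)).tendsto.comp hdist).const_mul C
      rwa [Real.zero_rpow hα.ne', mul_zero] at this
    refine squeeze_zero' ?_ ?_ hbd
    · exact Eventually.of_forall fun _ => dist_nonneg
    · filter_upwards [self_mem_nhdsWithin] with ζ hζ using hle ζ hζ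
  refine ⟨H, ?_, ?_⟩
  · -- H is Hölder everywhere
    intro ξ η
    refine le_limit_helper hα dist_nonneg hC (fun ε hε => ?_)
    haveI := hNeBot ξ
    haveI := hNeBot η
    have h1 : ∀ᶠ ζ in 𝓝[G] ξ, dist (F ζ) (H ξ) < ε ∧ dist ζ ξ < ε ∧ ζ ∈ G := by
      refine (((hHtendsto ξ).eventually (Metric.ball_mem_nhds (H ξ) hε)).and
        ((tendsto_id.mono_left nhdsWithin_le_nhds
          : Tendsto id (𝓝[G] ξ) (𝓝 ξ)).eventually (Metric.ball_mem_nhds ξ hε))).mp ?_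
      filter_upwards [self_mem_nhdsWithin] with ζ hζG hζ
      exact ⟨hζ.1, hζ.2, hζG⟩
    have h2 : ∀ᶠ ζ in 𝓝[G] η, dist (F ζ) (H η) < ε ∧ dist ζ η < ε ∧ ζ ∈ G := by
      refine (((hHtendsto η).eventually (Metric.ball_mem_nhds (H η) hε)).and
        ((tendsto_id.mono_left nhdsWithin_le_nhds
          : Tendsto id (𝓝[G] η) (𝓝 η)).eventually (Metric.ball_mem_nhds η hε))).mp ?_
      filter_upwards [self_mem_nhdsWithin] with ζ hζG hζ
      exact ⟨hζ.1, hζ.2, hζG⟩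
    obtain ⟨a, ha1, ha2, haG⟩ := h1.exists
    obtain ⟨b, hb1, hb2, hbG⟩ := h2.exists
    have hab : dist a b ≤ dist ξ η + 2 * ε := by
      have t1 := dist_triangle a ξ b
      have t2 := dist_triangle ξ η b
      rw [dist_comm η b] at t2
      linarith [dist_comm b η ▸ hb2]
    calc dist (H ξ) (H η)
        ≤ dist (H ξ) (F a) + dist (F a) (F b) + dist (F b) (H η) :=
          dist_triangle4 _ _ _ _
      _ ≤ ε + C * dist a b ^ α + ε := by
          refine add_le_add (add_le_add ?_ (hFG a haG b hbG)) ?_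
          · rw [dist_comm]; exact ha1.le
          · exact hb1.le
      _ ≤ C * ε ^ α + C * (dist ξ η + 2 * ε) ^ α + 2 * ε := by
          have hrp : C * dist a b ^ α ≤ C * (dist ξ η + 2 * ε) ^ α :=
            mul_le_mul_of_nonneg_left (Real.rpow_le_rpow dist_nonneg hab hα.le) hC
          have : (0:ℝ) ≤ C * ε ^ α :=
            mul_nonneg hC (Real.rpow_nonneg hε.le α)
          linarith
  · -- F = H a.e.
    filter_upwards [hG] with ξ hξ
    exact (hHG ξ hξ).symm
end

section
/- Let G be a countable group acting by Borel automorphisms on a standard Borel space Ω, and let ν and ν' be equivalent σ-finite Borel measures on Ω, each quasi-invariant under the G-action. Assume both are almost invariant: there exist A ≥ 1 and A' ≥ 1 such that A^{−1} ≤ d(g_*ν)/dν ≤ A holds ν-a.e. for every g ∈ G, and (A')^{−1} ≤ d(g_*ν')/dν' ≤ A' holds ν'-a.e. for every g ∈ G. Assume furthermore that the action of G on (Ω,ν) is ergodic, i.e. every G-invariant Borel subset of Ω is ν-null or ν-conull. Then there exist constants 0 < c ≤ C < ∞ such that c ≤ dν/dν' ≤ C holds ν-almost everywhere. -/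
open MeasureTheory
open scoped ENNReal NNReal Pointwise

/-- If two equivalent σ-finite measures `ν, ν'` on a standard Borel space are almost invariant
under a Borel action of a countable group `G` (Radon–Nikodym derivatives of all translates
uniformly bounded between positive constants), and the action is ergodic with respect to `ν`,
then the Radon–Nikodym derivative `dν/dν'` is bounded between two positive constants a.e. -/
theorem almost_invariant_ergodic_rnDeriv_bounded
    {G : Type*} [Group G] [Countable G]
    {Ω : Type*} [MeasurableSpace Ω] [StandardBorelSpace Ω]
    [MulAction G Ω] (hmeas : ∀ g : G, Measurable fun ω : Ω => g • ω)
    (ν ν' : Measure Ω) [SigmaFinite ν] [SigmaFinite ν']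
    (hequiv : ν ≪ ν' ∧ ν' ≪ ν)
    (hqi : ∀ g : G, ν.map (fun ω => g • ω) ≪ ν)
    (hqi' : ∀ g : G, ν'.map (fun ω => g • ω) ≪ ν')
    (A : ℝ≥0) (hA : 1 ≤ A)
    (hai : ∀ g : G, ∀ᵐ ω ∂ν,
      (A⁻¹ : ℝ≥0∞) ≤ (ν.map (fun ω => g • ω)).rnDeriv ν ω ∧
        (ν.map (fun ω => g • ω)).rnDeriv ν ω ≤ (A : ℝ≥0∞))
    (A' : ℝ≥0) (hA' : 1 ≤ A')
    (hai' : ∀ g : G, ∀ᵐ ω ∂ν',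
      (A'⁻¹ : ℝ≥0∞) ≤ (ν'.map (fun ω => g • ω)).rnDeriv ν' ω ∧
        (ν'.map (fun ω => g • ω)).rnDeriv ν' ω ≤ (A' : ℝ≥0∞))
    (herg : ∀ S : Set Ω, MeasurableSet S → (∀ g : G, g • S = S) →
      ν S = 0 ∨ ν Sᶜ = 0) :
    ∃ c C : ℝ≥0, 0 < c ∧ c ≤ C ∧
      ∀ᵐ ω ∂ν, (c : ℝ≥0∞) ≤ ν.rnDeriv ν' ω ∧ ν.rnDeriv ν' ω ≤ (C : ℝ≥0∞) := by
  obtain ⟨hνν', hν'ν⟩ := hequiv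
  rcases eq_or_ne ν 0 with hν0 | hν0
  · exact ⟨1, 1, one_pos, le_rfl, by simp [hν0]⟩
  set f := ν.rnDeriv ν' with hfdef
  -- each translation is a measurable embedding
  have emb : ∀ g : G, MeasurableEmbedding (fun ω : Ω => g • ω) := fun g =>
    (MeasurableEquiv.mk (MulAction.toPerm g) (hmeas g) (hmeas g⁻¹)).measurableEmbedding
  -- constants
  have hA0 : (A : ℝ≥0∞) ≠ 0 := by
    simp only [ne_eq, ENNReal.coe_eq_zero]
    exact fun h => by simp [h] at hA
  have hA'0 : (A' : ℝ≥0∞) ≠ 0 := by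
    simp only [ne_eq, ENNReal.coe_eq_zero]
    exact fun h => by simp [h] at hA'
  set K : ℝ≥0∞ := (A : ℝ≥0∞) * (A' : ℝ≥0∞) with hKdef
  have hK0 : K ≠ 0 := mul_ne_zero hA0 hA'0
  have hKtop : K ≠ ∞ := ENNReal.mul_ne_top ENNReal.coe_ne_top ENNReal.coe_ne_top
  have hK1 : 1 ≤ K := by
    calc (1 : ℝ≥0∞) = 1 * 1 := (one_mul 1).symm
    _ ≤ K := mul_le_mul' (by exact_mod_cast hA) (by exact_mod_cast hA')
  -- key step: a.e. comparison of f with its translates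
  have key : ∀ g : G, ∀ᵐ ω ∂ν, K⁻¹ * f (g • ω) ≤ f ω ∧ f ω ≤ K * f (g • ω) := by
    intro g
    set T : Ω → Ω := fun ω => g • ω with hTdef
    haveI : SigmaFinite (ν.map T) := (emb g).sigmaFinite_map
    haveI : SigmaFinite (ν'.map T) := (emb g).sigmaFinite_map
    have habs : ν.map T ≪ ν'.map T := hνν'.map (hmeas g)
    have h1 : (ν.map T).rnDeriv ν * ν.rnDeriv ν' =ᵐ[ν'] (ν.map T).rnDeriv ν' :=
      Measure.rnDeriv_mul_rnDeriv (hqi g)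
    have h2 : (ν.map T).rnDeriv (ν'.map T) * (ν'.map T).rnDeriv ν' =ᵐ[ν'] (ν.map T).rnDeriv ν' :=
      Measure.rnDeriv_mul_rnDeriv habs
    have h3 : (fun ω => (ν.map T).rnDeriv (ν'.map T) (T ω)) =ᵐ[ν'] ν.rnDeriv ν' :=
      (emb g).rnDeriv_map ν ν'
    have ha : ∀ᵐ ω ∂ν',
        (A⁻¹ : ℝ≥0∞) ≤ (ν.map T).rnDeriv ν ω ∧ (ν.map T).rnDeriv ν ω ≤ (A : ℝ≥0∞) :=
      hν'ν.ae_le (hai g)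
    -- bound the rnDeriv of the mapped measures by f, a.e. ν'
    have bound_at : ∀ᵐ ω ∂ν',
        K⁻¹ * f ω ≤ (ν.map T).rnDeriv (ν'.map T) ω ∧
          (ν.map T).rnDeriv (ν'.map T) ω ≤ K * f ω := by
      filter_upwards [h1, h2, ha, hai' g] with ω e1 e2 ha' hb'
      obtain ⟨ha1, ha2⟩ := ha'
      obtain ⟨hb1, hb2⟩ := hb'
      simp only [Pi.mul_apply] at e1 e2
      set h := (ν.map T).rnDeriv (ν'.map T) ω
      set a := (ν.map T).rnDeriv ν ω
      set b := (ν'.map T).rnDeriv ν' ω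
      have heq : h * b = a * f ω := by rw [e2, ← e1]
      have hb1' : ((A' : ℝ≥0∞))⁻¹ ≤ b := hb1
      constructor
      · -- lower bound
        have step : (A : ℝ≥0∞)⁻¹ * f ω ≤ h * (A' : ℝ≥0∞) := by
          calc (A : ℝ≥0∞)⁻¹ * f ω ≤ a * f ω := by
                exact mul_le_mul_left ha1 _
          _ = h * b := heq.symm
          _ ≤ h * (A' : ℝ≥0∞) := mul_le_mul_right hb2 _
        have : (A : ℝ≥0∞)⁻¹ * f ω * (A' : ℝ≥0∞)⁻¹ ≤ h := by
          calc (A : ℝ≥0∞)⁻¹ * f ω * (A' : ℝ≥0∞)⁻¹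
              ≤ h * (A' : ℝ≥0∞) * (A' : ℝ≥0∞)⁻¹ := mul_le_mul_left step _
          _ = h := by
              rw [mul_assoc, ENNReal.mul_inv_cancel hA'0 ENNReal.coe_ne_top, mul_one]
        calc K⁻¹ * f ω = (A : ℝ≥0∞)⁻¹ * f ω * (A' : ℝ≥0∞)⁻¹ := by
              rw [hKdef, ENNReal.mul_inv (Or.inl hA0) (Or.inl ENNReal.coe_ne_top)]
              ring
        _ ≤ h := this
      · -- upper bound
        have step : h * (A' : ℝ≥0∞)⁻¹ ≤ (A : ℝ≥0∞) * f ω := by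
          calc h * (A' : ℝ≥0∞)⁻¹ ≤ h * b := mul_le_mul_right hb1' _
          _ = a * f ω := heq
          _ ≤ (A : ℝ≥0∞) * f ω := mul_le_mul_left ha2 _
        calc h = h * (A' : ℝ≥0∞)⁻¹ * (A' : ℝ≥0∞) := by
              rw [mul_assoc, ENNReal.inv_mul_cancel hA'0 ENNReal.coe_ne_top, mul_one]
        _ ≤ (A : ℝ≥0∞) * f ω * (A' : ℝ≥0∞) := mul_le_mul_left step _
        _ = K * f ω := by rw [hKdef]; ring
    -- pull back along g
    have pull : ∀ᵐ ω ∂ν',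
        K⁻¹ * f (g • ω) ≤ (ν.map T).rnDeriv (ν'.map T) (T ω) ∧
          (ν.map T).rnDeriv (ν'.map T) (T ω) ≤ K * f (g • ω) := by
      have h4 : ∀ᵐ x ∂(Measure.map (fun ω => g • ω) ν'),
          K⁻¹ * f x ≤ (ν.map T).rnDeriv (ν'.map T) x ∧
            (ν.map T).rnDeriv (ν'.map T) x ≤ K * f x := (hqi' g).ae_le bound_at
      exact ((emb g).ae_map_iff).mp h4
    have res : ∀ᵐ ω ∂ν', K⁻¹ * f (g • ω) ≤ f ω ∧ f ω ≤ K * f (g • ω) := by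
      filter_upwards [pull, h3] with ω hp he
      rw [he] at hp
      exact hp
    exact hνν'.ae_le res
  have hall : ∀ᵐ ω ∂ν, ∀ g : G, K⁻¹ * f (g • ω) ≤ f ω ∧ f ω ≤ K * f (g • ω) :=
    ae_all_iff.mpr key
  have hfmeas : Measurable f := Measure.measurable_rnDeriv ν ν'
  have hpos : ∀ᵐ ω ∂ν, 0 < f ω := Measure.rnDeriv_pos hνν'
  have hfin : ∀ᵐ ω ∂ν, f ω < ∞ := hνν'.ae_le (Measure.rnDeriv_lt_top ν ν')
  -- a helper: given a family of measurable sets covering a.e., a translate-union argument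
  have invariant_union : ∀ E : Set Ω, MeasurableSet E → ν E ≠ 0 →
      ν (⋃ g : G, g • E)ᶜ = 0 := by
    intro E hEmeas hEpos
    set S : Set Ω := ⋃ g : G, g • E with hSdef
    have hSmeas : MeasurableSet S := by
      refine MeasurableSet.iUnion fun g => ?_
      have : g • E = (fun ω : Ω => g⁻¹ • ω) ⁻¹' E := by
        ext x
        simp [Set.mem_smul_set_iff_inv_smul_mem]
      rw [this]
      exact hmeas g⁻¹ hEmeas
    have hSinv : ∀ h : G, h • S = S := by
      intro h
      rw [hSdef, Set.smul_set_iUnion]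
      ext x
      simp only [Set.mem_iUnion]
      constructor
      · rintro ⟨g, hg⟩
        rw [smul_smul] at hg
        exact ⟨h * g, hg⟩
      · rintro ⟨g, hg⟩
        refine ⟨h⁻¹ * g, ?_⟩
        rw [smul_smul, mul_inv_cancel_left]
        exact hg
    rcases herg S hSmeas hSinv with h0 | h1
    · exfalso
      apply hEpos
      have hsub : E ⊆ S := by
        intro x hx
        exact Set.mem_iUnion.mpr ⟨1, by simpa using hx⟩
      exact le_antisymm (le_trans (measure_mono hsub) h0.le) (zero_le)
    · exact h1
  -- upper bound set
  obtain ⟨n, hn⟩ : ∃ n : ℕ, ν {ω | f ω ≤ ((n : ℝ≥0∞) + 1)} ≠ 0 := by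
    by_contra hcon
    push_neg at hcon
    have hnull : ν (⋃ n : ℕ, {ω | f ω ≤ ((n : ℝ≥0∞) + 1)}) = 0 :=
      measure_iUnion_null hcon
    have : ∀ᵐ ω ∂ν, False := by
      filter_upwards [hfin, (measure_eq_zero_iff_ae_notMem.mp hnull)] with ω hω hmem
      obtain ⟨m, hm⟩ := ENNReal.exists_nat_gt hω.ne
      exact hmem (Set.mem_iUnion.mpr ⟨m, le_trans hm.le (le_add_right le_rfl)⟩)
    rw [ae_iff] at this
    simp only [not_false_eq_true, Set.setOf_true] at this
    exact hν0 (Measure.measure_univ_eq_zero.mp this)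
  -- lower bound set
  obtain ⟨m, hm⟩ : ∃ m : ℕ, ν {ω | ((m : ℝ≥0∞) + 1)⁻¹ ≤ f ω} ≠ 0 := by
    by_contra hcon
    push_neg at hcon
    have hnull : ν (⋃ m : ℕ, {ω | ((m : ℝ≥0∞) + 1)⁻¹ ≤ f ω}) = 0 :=
      measure_iUnion_null hcon
    have : ∀ᵐ ω ∂ν, False := by
      filter_upwards [hpos, (measure_eq_zero_iff_ae_notMem.mp hnull)] with ω hω hmem
      obtain ⟨k, hk⟩ := ENNReal.exists_inv_nat_lt hω.ne'
      refine hmem (Set.mem_iUnion.mpr ⟨k, le_trans ?_ hk.le⟩)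
      exact ENNReal.inv_le_inv.mpr (le_add_right le_rfl)
    rw [ae_iff] at this
    simp only [not_false_eq_true, Set.setOf_true] at this
    exact hν0 (Measure.measure_univ_eq_zero.mp this)
  have hEmeas : MeasurableSet {ω | f ω ≤ ((n : ℝ≥0∞) + 1)} :=
    measurableSet_le hfmeas measurable_const
  have hFmeas : MeasurableSet {ω | ((m : ℝ≥0∞) + 1)⁻¹ ≤ f ω} :=
    measurableSet_le measurable_const hfmeas
  have hScoE := invariant_union _ hEmeas hn
  have hScoF := invariant_union _ hFmeas hm
  -- constants
  refine ⟨(A * A' * (m + 1 : ℕ))⁻¹, A * A' * (n + 1 : ℕ), ?_, ?_, ?_⟩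
  · rw [inv_pos]
    positivity
  · have h1 : (A * A' * (m + 1 : ℕ))⁻¹ ≤ 1 := by
      refine inv_le_one_of_one_le₀ ?_
      have : (1 : ℝ≥0) ≤ (m + 1 : ℕ) := by exact_mod_cast Nat.succ_le_succ (Nat.zero_le m)
      calc (1 : ℝ≥0) = 1 * 1 * 1 := by ring
      _ ≤ A * A' * (m + 1 : ℕ) := by
          exact mul_le_mul' (mul_le_mul' hA hA') this
    have h2 : (1 : ℝ≥0) ≤ A * A' * (n + 1 : ℕ) := by
      have : (1 : ℝ≥0) ≤ (n + 1 : ℕ) := by exact_mod_cast Nat.succ_le_succ (Nat.zero_le n)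
      calc (1 : ℝ≥0) = 1 * 1 * 1 := by ring
      _ ≤ A * A' * (n + 1 : ℕ) := mul_le_mul' (mul_le_mul' hA hA') this
    exact le_trans h1 h2
  · have hcoν'E : ∀ᵐ ω ∂ν, ω ∈ ⋃ g : G, g • {ω | f ω ≤ ((n : ℝ≥0∞) + 1)} :=
      (measure_eq_zero_iff_ae_notMem.mp hScoE).mono fun ω h => not_not.mp h
    have hcoν'F : ∀ᵐ ω ∂ν, ω ∈ ⋃ g : G, g • {ω | ((m : ℝ≥0∞) + 1)⁻¹ ≤ f ω} :=
      (measure_eq_zero_iff_ae_notMem.mp hScoF).mono fun ω h => not_not.mp h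
    filter_upwards [hall, hcoν'E, hcoν'F] with ω hω hE hF
    constructor
    · -- lower bound
      obtain ⟨g, hgF⟩ := Set.mem_iUnion.mp hF
      rw [Set.mem_smul_set_iff_inv_smul_mem] at hgF
      have hfg : ((m : ℝ≥0∞) + 1)⁻¹ ≤ f (g⁻¹ • ω) := hgF
      have hlow := (hω g⁻¹).1
      have : K⁻¹ * ((m : ℝ≥0∞) + 1)⁻¹ ≤ f ω :=
        le_trans (mul_le_mul_right hfg _) hlow
      refine le_trans (le_of_eq ?_) this
      rw [ENNReal.coe_inv (by positivity), ← ENNReal.mul_inv (Or.inl hK0) (Or.inl hKtop)]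
      push_cast
      rw [hKdef]
    · -- upper bound
      obtain ⟨g, hgE⟩ := Set.mem_iUnion.mp hE
      rw [Set.mem_smul_set_iff_inv_smul_mem] at hgE
      have hfg : f (g⁻¹ • ω) ≤ ((n : ℝ≥0∞) + 1) := hgE
      have hup := (hω g⁻¹).2
      have : f ω ≤ K * ((n : ℝ≥0∞) + 1) := le_trans hup (mul_le_mul_right hfg _)
      refine le_trans this (le_of_eq ?_)
      push_cast
      rw [hKdef]
end
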